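/- arXiv:2208.03420 — 4 statements merged into one kernel-verified Lean document; each statement's English description precedes it below -/
import Mathlib

section
/- For differential forms on a star-shaped domain, the Poincaré (Koszul-type) homotopy operators satisfy the identity d∘p + p∘d = I on k-forms for 0 < k < n, where d is the exterior derivative and p is the Poincaré operator defined by integration along rays from the star center. -/
set_option maxHeartbeats 1000000
set_option linter.unusedVariables false


open scoped BigOperators
open MeasureTheory

noncomputable section

/-- Differential `k`-forms on `ℝⁿ`: alternating-map valued functions. -/
abbrev DForm (n k : ℕ) := (Fin n → ℝ) → ((Fin n → ℝ) [⋀^Fin k]→ₗ[ℝ] ℝ)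

/-- The underlying value function of a form. -/
def fval {n k : ℕ} (ω : DForm n k) : (Fin n → ℝ) → (Fin k → (Fin n → ℝ)) → ℝ :=
  fun x v => ω x v

/-- Exterior derivative, given by the standard value formula. -/
def dOp {n k : ℕ} (ω : (Fin n → ℝ) → (Fin k → (Fin n → ℝ)) → ℝ) :
    (Fin n → ℝ) → (Fin (k + 1) → (Fin n → ℝ)) → ℝ :=
  fun x v => ∑ i : Fin (k + 1), (-1 : ℝ) ^ (i : ℕ) *
    fderiv ℝ (fun y => ω y (v ∘ i.succAbove)) x (v i)

/-- Poincaré (homotopy) operator with center `x₀`, acting on (`k+1`)-forms: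
`(pω)(x)(v₁,…,v_k) = ∫₀¹ t^k ω(x₀ + t(x−x₀))(x−x₀, v₁,…,v_k) dt`. -/
def pOp {n k : ℕ} (x₀ : Fin n → ℝ)
    (ω : (Fin n → ℝ) → (Fin (k + 1) → (Fin n → ℝ)) → ℝ) :
    (Fin n → ℝ) → (Fin k → (Fin n → ℝ)) → ℝ :=
  fun x v => ∫ t in (0 : ℝ)..1,
    t ^ k * ω (x₀ + t • (x - x₀)) (Fin.cons (x - x₀) v)

namespace PoincareAux
variable {n m : ℕ}
def bas (n : ℕ) (j : Fin n) : Fin n → ℝ := Pi.single j 1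

theorem cons_expand (φ : (Fin n → ℝ) [⋀^Fin (m+1)]→ₗ[ℝ] ℝ) (a : Fin n → ℝ)
    (w : Fin m → (Fin n → ℝ)) :
    φ (Fin.cons a w) = ∑ j : Fin n, a j * φ (Fin.cons (bas n j) w) := by
  have ha : a = ∑ j : Fin n, a j • bas n j := by
    funext k
    simp [Finset.sum_apply, bas, Pi.single_apply]
  calc φ (Fin.cons a w)
      = φ (Function.update (Fin.cons a w) 0 (∑ j : Fin n, a j • bas n j)) := by
        rw [Fin.update_cons_zero, ← ha]
    _ = ∑ j : Fin n, φ (Function.update (Fin.cons a w) 0 (a j • bas n j)) :=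
        φ.map_update_sum Finset.univ 0 _ _
    _ = ∑ j : Fin n, a j * φ (Fin.cons (bas n j) w) := by
        refine Finset.sum_congr rfl fun j _ => ?_
        rw [φ.map_update_smul, Fin.update_cons_zero]; simp

section Main
variable (Ω : Set (Fin n → ℝ)) (hΩ : IsOpen Ω) (x₀ : Fin n → ℝ)
  (hstar : ∀ x ∈ Ω, ∀ t ∈ Set.Icc (0 : ℝ) 1, x₀ + t • (x - x₀) ∈ Ω)
  (ω : DForm n (m + 1))
  (hsmooth : ∀ v : Fin (m + 1) → (Fin n → ℝ),
      ContDiffOn ℝ (⊤ : ℕ∞) (fun x => fval ω x v) Ω)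
include hΩ hstar hsmooth

omit hstar in
theorem fderiv_cons_expand (u : Fin n → ℝ) (w : Fin m → (Fin n → ℝ))
    {y : Fin n → ℝ} (hy : y ∈ Ω) :
    fderiv ℝ (fun y' => fval ω y' (Fin.cons u w)) y
      = ∑ j : Fin n, u j • fderiv ℝ (fun y' => fval ω y' (Fin.cons (bas n j) w)) y := by
  have hfe : (fun y' => fval ω y' (Fin.cons u w))
      = fun y' => ∑ j : Fin n, u j * fval ω y' (Fin.cons (bas n j) w) := by
    funext y'; exact cons_expand (ω y') u w
  have hdiff : ∀ j : Fin n, DifferentiableAt ℝ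
      (fun y' => fval ω y' (Fin.cons (bas n j) w)) y := fun j =>
    ((hsmooth _).differentiableOn (by simp)).differentiableAt (hΩ.mem_nhds hy)
  rw [hfe, fderiv_fun_sum (fun j _ => (hdiff j).const_mul (u j))]
  refine Finset.sum_congr rfl fun j _ => ?_
  rw [fderiv_const_mul (hdiff j)]

theorem fderiv_pOp_apply {x : Fin n → ℝ} (hx : x ∈ Ω) (w : Fin m → (Fin n → ℝ))
    (h : Fin n → ℝ) :
    fderiv ℝ (fun x' => pOp x₀ (fval ω) x' w) x h
      = ∫ t in (0:ℝ)..1,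
          (t ^ m * fval ω (x₀ + t • (x - x₀)) (Fin.cons h w)
            + t ^ (m+1) * fderiv ℝ (fun y => fval ω y (Fin.cons (x - x₀) w))
                (x₀ + t • (x - x₀)) h) := by
  classical
  set g : Fin n → (Fin n → ℝ) → ℝ := fun j y => fval ω y (Fin.cons (bas n j) w) with hg_def
  have hgc : ∀ j, ContinuousOn (g j) Ω := fun j => (hsmooth _).continuousOn
  have hgd : ∀ j, ∀ y ∈ Ω, DifferentiableAt ℝ (g j) y := fun j y hy =>
    ((hsmooth _).differentiableOn (by simp)).differentiableAt (hΩ.mem_nhds hy)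
  have hgf : ∀ j, ContinuousOn (fderiv ℝ (g j)) Ω := fun j =>
    (hsmooth _).continuousOn_fderiv_of_isOpen hΩ (mod_cast le_top)
  obtain ⟨δ, δpos, hδ⟩ := Metric.isOpen_iff.1 hΩ x hx
  have εpos : 0 < δ/2 := half_pos δpos
  have hball : Metric.closedBall x (δ/2) ⊆ Ω :=
    (Metric.closedBall_subset_ball (by linarith)).trans hδ
  set K : Set (Fin n → ℝ) := (fun p : ℝ × (Fin n → ℝ) => x₀ + p.1 • (p.2 - x₀)) ''
    (Set.Icc (0:ℝ) 1 ×ˢ Metric.closedBall x (δ/2)) with hK_def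
  have hK : IsCompact K := ((isCompact_Icc).prod (isCompact_closedBall x (δ/2))).image
    (by fun_prop)
  have hKΩ : K ⊆ Ω := by
    rintro y ⟨⟨t, x'⟩, ⟨ht, hx'⟩, rfl⟩
    exact hstar x' (hball hx') t ht
  have hmemK : ∀ t ∈ Set.Icc (0:ℝ) 1, ∀ x' ∈ Metric.closedBall x (δ/2),
      x₀ + t • (x' - x₀) ∈ K := fun t ht x' hx' => ⟨(t, x'), ⟨ht, hx'⟩, rfl⟩
  choose C hC using fun j => hK.exists_bound_of_continuousOn ((hgc j).mono hKΩ)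
  choose D hD using fun j => hK.exists_bound_of_continuousOn ((hgf j).mono hKΩ)
  set R : ℝ := δ/2 + ‖x - x₀‖ with hR
  have hR0 : 0 ≤ R := by positivity
  set B : ℝ := ∑ j : Fin n, (|C j| + R * |D j|) with hB
  set F : (Fin n → ℝ) → ℝ → ℝ := fun x' t =>
    t ^ m * fval ω (x₀ + t • (x' - x₀)) (Fin.cons (x' - x₀) w) with hF_def
  set F' : (Fin n → ℝ) → ℝ → ((Fin n → ℝ) →L[ℝ] ℝ) := fun x' t =>
    ∑ j : Fin n, ((t ^ m * g j (x₀ + t • (x' - x₀))) • (ContinuousLinearMap.proj j)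
      + (t ^ (m+1) * (x' j - x₀ j)) • fderiv ℝ (g j) (x₀ + t • (x' - x₀))) with hF'_def
  have hγcont : ∀ x' : Fin n → ℝ, Continuous (fun t : ℝ => x₀ + t • (x' - x₀)) := by
    intro x'; fun_prop
  have hmaps : ∀ x' ∈ Ω, Set.MapsTo (fun t : ℝ => x₀ + t • (x' - x₀)) (Set.Icc 0 1) Ω :=
    fun x' hx' t ht => hstar x' hx' t ht
  have hproj : ∀ j : Fin n, ‖(ContinuousLinearMap.proj j : (Fin n → ℝ) →L[ℝ] ℝ)‖ ≤ 1 :=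
    fun j => ContinuousLinearMap.opNorm_le_bound _ zero_le_one fun z => by
      simpa using norm_le_pi_norm z j
  have hFcont : ∀ x' ∈ Ω, ContinuousOn (fun t => F x' t) (Set.Icc (0:ℝ) 1) := fun x' hx' =>
    (continuousOn_pow m).mul
      (((hsmooth _).continuousOn).comp (hγcont x').continuousOn (hmaps x' hx'))
  have hF'cont : ∀ x' ∈ Ω, ContinuousOn (fun t => F' x' t) (Set.Icc (0:ℝ) 1) := by
    intro x' hx'
    apply continuousOn_finset_sum
    intro j _
    exact (((continuousOn_pow m).mul
        ((hgc j).comp (hγcont x').continuousOn (hmaps x' hx'))).smul continuousOn_const).add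
      (((continuousOn_pow (m+1)).mul continuousOn_const).smul
        ((hgf j).comp (hγcont x').continuousOn (hmaps x' hx')))
  have huIoc : Set.uIoc (0:ℝ) 1 = Set.Ioc 0 1 := Set.uIoc_of_le zero_le_one
  have huIcc : Set.uIcc (0:ℝ) 1 = Set.Icc 0 1 := Set.uIcc_of_le zero_le_one
  have hF'int : IntervalIntegrable (fun t => F' x t) volume 0 1 :=
    (huIcc ▸ hF'cont x hx).intervalIntegrable
  have key : HasFDerivAt (fun x' => ∫ t in (0:ℝ)..1, F x' t) (∫ t in (0:ℝ)..1, F' x t) x := by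
    apply intervalIntegral.hasFDerivAt_integral_of_dominated_of_fderiv_le
      (bound := fun _ => B) (Metric.ball_mem_nhds x εpos)
    · filter_upwards [hΩ.mem_nhds hx] with x' hx'
      rw [huIoc]
      exact ((hFcont x' hx').mono Set.Ioc_subset_Icc_self).aestronglyMeasurable
        measurableSet_Ioc
    · exact (huIcc ▸ hFcont x hx).intervalIntegrable
    · rw [huIoc]
      exact ((hF'cont x hx).mono Set.Ioc_subset_Icc_self).aestronglyMeasurable
        measurableSet_Ioc
    · refine Filter.Eventually.of_forall fun t ht x' hx' => ?_
      have ht' : t ∈ Set.Icc (0:ℝ) 1 := Set.Ioc_subset_Icc_self (huIoc ▸ ht)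
      have hx'' : x' ∈ Metric.closedBall x (δ/2) := Metric.ball_subset_closedBall hx'
      have hmem : (x₀ + t • (x' - x₀)) ∈ K := hmemK t ht' x' hx''
      have htabs : |t| ≤ 1 := abs_le.mpr ⟨by linarith [ht'.1], ht'.2⟩
      have htpow : ∀ p : ℕ, |t ^ p| ≤ 1 := fun p => by
        rw [abs_pow]; exact pow_le_one₀ (abs_nonneg t) htabs
      have htpow2 : ∀ p : ℕ, ‖t ^ p‖ ≤ 1 := fun p => by
        rw [Real.norm_eq_abs]; exact htpow p
      simp only [hF'_def, hB]
      refine (norm_sum_le _ _).trans ?_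
      refine Finset.sum_le_sum fun j _ => ?_
      have h1 : ‖(t ^ m * g j (x₀ + t • (x' - x₀))) •
          (ContinuousLinearMap.proj j : (Fin n → ℝ) →L[ℝ] ℝ)‖ ≤ |C j| := by
        apply le_trans (ContinuousLinearMap.opNorm_smul_le _ _)
        rw [norm_mul]
        have hg1 : ‖t ^ m‖ * ‖g j (x₀ + t • (x' - x₀))‖ ≤ 1 * |C j| :=
          mul_le_mul (htpow2 m) ((hC j _ hmem).trans (le_abs_self _)) (norm_nonneg _)
            zero_le_one
        calc ‖t ^ m‖ * ‖g j (x₀ + t • (x' - x₀))‖ * ‖(ContinuousLinearMap.proj j :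
              (Fin n → ℝ) →L[ℝ] ℝ)‖
            ≤ (1 * |C j|) * 1 :=
              mul_le_mul hg1 (hproj j) (norm_nonneg _) (by positivity)
          _ = |C j| := by ring
      have h2 : ‖(t ^ (m+1) * (x' j - x₀ j)) • fderiv ℝ (g j) (x₀ + t • (x' - x₀))‖
          ≤ R * |D j| := by
        apply le_trans (ContinuousLinearMap.opNorm_smul_le _ _)
        rw [norm_mul]
        have hxj : ‖x' j - x₀ j‖ ≤ R := by
          have h3 : ‖x' j - x₀ j‖ ≤ ‖x' - x₀‖ := by
            simpa using norm_le_pi_norm (x' - x₀) j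
          have h5 : ‖x' - x‖ ≤ δ/2 := by
            have := Metric.mem_closedBall.mp hx''
            rwa [dist_eq_norm] at this
          have h4 : ‖x' - x₀‖ ≤ δ/2 + ‖x - x₀‖ := by
            calc ‖x' - x₀‖ = ‖(x' - x) + (x - x₀)‖ := by rw [sub_add_sub_cancel]
              _ ≤ ‖x' - x‖ + ‖x - x₀‖ := norm_add_le _ _
              _ ≤ δ/2 + ‖x - x₀‖ := by linarith
          rw [hR]; exact h3.trans h4
        have hg2 : ‖t ^ (m+1)‖ * ‖x' j - x₀ j‖ ≤ 1 * R :=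
          mul_le_mul (htpow2 (m+1)) hxj (norm_nonneg _) zero_le_one
        calc ‖t ^ (m+1)‖ * ‖x' j - x₀ j‖ * ‖fderiv ℝ (g j) (x₀ + t • (x' - x₀))‖
            ≤ (1 * R) * |D j| :=
              mul_le_mul hg2 ((hD j _ hmem).trans (le_abs_self _)) (norm_nonneg _)
                (by positivity)
          _ = R * |D j| := by ring
      exact (norm_add_le _ _).trans (add_le_add h1 h2)
    · exact intervalIntegrable_const
    · refine Filter.Eventually.of_forall fun t ht x' hx' => ?_
      have ht' : t ∈ Set.Icc (0:ℝ) 1 := Set.Ioc_subset_Icc_self (huIoc ▸ ht)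
      have hx'Ω : x' ∈ Ω := hball (Metric.ball_subset_closedBall hx')
      have hyΩ : x₀ + t • (x' - x₀) ∈ Ω := hstar x' hx'Ω t ht'
      have hFeq : (fun x'' => F x'' t) = fun x'' => ∑ j : Fin n,
          t ^ m * ((x'' j - x₀ j) * g j (x₀ + t • (x'' - x₀))) := by
        funext x''
        show t ^ m * fval ω (x₀ + t • (x'' - x₀)) (Fin.cons (x'' - x₀) w) = _
        rw [show fval ω (x₀ + t • (x'' - x₀)) (Fin.cons (x'' - x₀) w)
            = ∑ j : Fin n, (x'' - x₀) j * g j (x₀ + t • (x'' - x₀)) from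
          cons_expand (ω _) _ w, Finset.mul_sum]
        simp [Pi.sub_apply]
      rw [hFeq]
      refine HasFDerivAt.fun_sum fun j _ => ?_
      have hA0 : HasFDerivAt (fun x'' : Fin n → ℝ => x'' j)
          (ContinuousLinearMap.proj j : (Fin n → ℝ) →L[ℝ] ℝ) x' :=
        hasFDerivAt_apply (𝕜 := ℝ) j x'
      have hA : HasFDerivAt (fun x'' : Fin n → ℝ => x'' j - x₀ j)
          (ContinuousLinearMap.proj j : (Fin n → ℝ) →L[ℝ] ℝ) x' := hA0.sub_const (x₀ j)
      have hinner : HasFDerivAt (fun x'' : Fin n → ℝ => x₀ + t • (x'' - x₀))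
          (t • ContinuousLinearMap.id ℝ (Fin n → ℝ)) x' := by
        have h1 : HasFDerivAt (fun x'' : Fin n → ℝ => x'' - x₀)
            (ContinuousLinearMap.id ℝ _) x' := (hasFDerivAt_id x').sub_const x₀
        exact (h1.const_smul t).const_add x₀
      have hout : HasFDerivAt (g j) (fderiv ℝ (g j) (x₀ + t • (x' - x₀)))
          (x₀ + t • (x' - x₀)) := (hgd j _ hyΩ).hasFDerivAt
      have hBd := hout.comp x' hinner
      have hcompEq : (fderiv ℝ (g j) (x₀ + t • (x' - x₀))).comp
          (t • ContinuousLinearMap.id ℝ (Fin n → ℝ))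
          = t • fderiv ℝ (g j) (x₀ + t • (x' - x₀)) := by
        ext z; simp
      rw [hcompEq] at hBd
      have hfin := (hA.mul hBd).const_mul (t ^ m)
      refine hfin.congr_fderiv ?_
      ext z
      simp only [ContinuousLinearMap.add_apply, ContinuousLinearMap.smul_apply,
        ContinuousLinearMap.proj_apply, smul_eq_mul, Function.comp_apply]
      ring
  have hfd : fderiv ℝ (fun x' => pOp x₀ (fval ω) x' w) x = ∫ t in (0:ℝ)..1, F' x t :=
    key.fderiv
  rw [hfd, ContinuousLinearMap.intervalIntegral_apply hF'int h]
  refine intervalIntegral.integral_congr fun t ht => ?_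
  have ht' : t ∈ Set.Icc (0:ℝ) 1 := huIcc ▸ ht
  have hyΩ : x₀ + t • (x - x₀) ∈ Ω := hstar x hx t ht'
  rw [show fval ω (x₀ + t • (x - x₀)) (Fin.cons h w)
      = ∑ j : Fin n, h j * g j (x₀ + t • (x - x₀)) from cons_expand (ω _) h w,
    fderiv_cons_expand Ω hΩ ω hsmooth (x - x₀) w hyΩ]
  simp only [hF'_def, ContinuousLinearMap.sum_apply, ContinuousLinearMap.add_apply,
    ContinuousLinearMap.smul_apply, ContinuousLinearMap.proj_apply, smul_eq_mul,
    Finset.mul_sum, Pi.sub_apply]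
  rw [← Finset.sum_add_distrib]
  refine Finset.sum_congr rfl fun j _ => ?_
  ring
end Main

theorem alt_sign {n m : ℕ} (φ : (Fin n → ℝ) [⋀^Fin (m+1)]→ₗ[ℝ] ℝ)
    (v : Fin (m+1) → (Fin n → ℝ)) (i : Fin (m+1)) :
    φ (Fin.cons (v i) (v ∘ i.succAbove)) = (-1:ℝ)^(i:ℕ) * φ v := by
  have hfun : Fin.cons (v i) (v ∘ i.succAbove)
      = v ∘ (i.cycleRange.symm : Equiv.Perm (Fin (m+1))) := by
    funext j
    induction j using Fin.cases with
    | zero => simp [Fin.cycleRange_symm_zero]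
    | succ k => simp [Fin.cycleRange_symm_succ]
  rw [hfun, φ.map_perm, Equiv.Perm.sign_symm, Fin.sign_cycleRange]
  rcases Nat.even_or_odd (i:ℕ) with he | he <;>
    simp [he.neg_one_pow, Odd.neg_one_pow, he, Units.smul_def]

theorem comp_succAbove_zero {n m : ℕ} (u : Fin n → ℝ) (v : Fin (m+1) → (Fin n → ℝ)) :
    (Fin.cons u v : Fin (m+2) → (Fin n → ℝ)) ∘ (0 : Fin (m+2)).succAbove = v := by
  funext j; simp [Fin.succAbove]

theorem comp_succAbove_succ {n m : ℕ} (u : Fin n → ℝ) (v : Fin (m+1) → (Fin n → ℝ))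
    (i : Fin (m+1)) :
    (Fin.cons u v : Fin (m+2) → (Fin n → ℝ)) ∘ (i.succ).succAbove
      = Fin.cons u (v ∘ i.succAbove) := by
  funext j
  induction j using Fin.cases with
  | zero => simp
  | succ k => simp [Fin.succ_succAbove_succ]

end PoincareAux

open PoincareAux

/-- On an open star-shaped domain `Ω ⊆ ℝⁿ` with star center `x₀`,
for every smooth `k`-form `ω` with `1 ≤ k ≤ n − 1` (here `k = m + 1`), the Poincaré
operator satisfies the homotopy identity `d(pω) + p(dω) = ω` on `Ω`. -/
theorem poincare_homotopy_identity
    (n m : ℕ) (hk : m + 1 ≤ n - 1)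
    (Ω : Set (Fin n → ℝ)) (hΩ : IsOpen Ω)
    (x₀ : Fin n → ℝ) (hx₀ : x₀ ∈ Ω)
    (hstar : ∀ x ∈ Ω, ∀ t ∈ Set.Icc (0 : ℝ) 1, x₀ + t • (x - x₀) ∈ Ω)
    (ω : DForm n (m + 1))
    (hsmooth : ∀ v : Fin (m + 1) → (Fin n → ℝ),
      ContDiffOn ℝ (⊤ : ℕ∞) (fun x => fval ω x v) Ω) :
    ∀ x ∈ Ω, ∀ v : Fin (m + 1) → (Fin n → ℝ),
      dOp (pOp x₀ (fval ω)) x v + pOp x₀ (dOp (fval ω)) x v = fval ω x v := by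
  
  intro x hx v
  have huIcc : Set.uIcc (0:ℝ) 1 = Set.Icc 0 1 := Set.uIcc_of_le zero_le_one
  have hγc : Continuous (fun t : ℝ => x₀ + t • (x - x₀)) := by fun_prop
  have hmaps : Set.MapsTo (fun t : ℝ => x₀ + t • (x - x₀)) (Set.Icc 0 1) Ω :=
    fun t ht => hstar x hx t ht
  have contf : ∀ wv : Fin (m+1) → (Fin n → ℝ),
      ContinuousOn (fun t => fval ω (x₀ + t • (x - x₀)) wv) (Set.Icc (0:ℝ) 1) :=
    fun wv => (hsmooth wv).continuousOn.comp hγc.continuousOn hmaps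
  have contD : ∀ (wv : Fin (m+1) → (Fin n → ℝ)) (h' : Fin n → ℝ),
      ContinuousOn (fun t => fderiv ℝ (fun y => fval ω y wv) (x₀ + t • (x - x₀)) h')
        (Set.Icc (0:ℝ) 1) := fun wv h' =>
    (((hsmooth wv).continuousOn_fderiv_of_isOpen hΩ (mod_cast le_top)).comp
      hγc.continuousOn hmaps).clm_apply continuousOn_const
  -- integrands
  have intP : ∀ i : Fin (m+1), IntervalIntegrable
      (fun t => t^m * fval ω (x₀ + t • (x - x₀)) (Fin.cons (v i) (v ∘ i.succAbove)))
      volume 0 1 :=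
    fun i => (huIcc ▸ ((continuousOn_pow m).mul (contf _))).intervalIntegrable
  have intQ : ∀ i : Fin (m+1), IntervalIntegrable
      (fun t => t^(m+1) * fderiv ℝ (fun y => fval ω y (Fin.cons (x - x₀) (v ∘ i.succAbove)))
        (x₀ + t • (x - x₀)) (v i)) volume 0 1 :=
    fun i => (huIcc ▸ ((continuousOn_pow (m+1)).mul (contD _ _))).intervalIntegrable
  have intR : IntervalIntegrable
      (fun t => t^(m+1) * fderiv ℝ (fun y => fval ω y v) (x₀ + t • (x - x₀)) (x - x₀))
      volume 0 1 :=
    (huIcc ▸ ((continuousOn_pow (m+1)).mul (contD _ _))).intervalIntegrable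
  have intA : IntervalIntegrable (fun t => t^m * fval ω (x₀ + t • (x - x₀)) v) volume 0 1 :=
    (huIcc ▸ ((continuousOn_pow m).mul (contf _))).intervalIntegrable
  -- step 1 : the d(pω) term
  have hd : dOp (pOp x₀ (fval ω)) x v = ∑ i : Fin (m+1), (-1:ℝ)^(i:ℕ) *
      ((∫ t in (0:ℝ)..1, t^m * fval ω (x₀ + t • (x - x₀)) (Fin.cons (v i) (v ∘ i.succAbove)))
        + ∫ t in (0:ℝ)..1, t^(m+1) * fderiv ℝ
            (fun y => fval ω y (Fin.cons (x - x₀) (v ∘ i.succAbove)))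
            (x₀ + t • (x - x₀)) (v i)) := by
    simp only [dOp]
    refine Finset.sum_congr rfl fun i _ => ?_
    rw [fderiv_pOp_apply Ω hΩ x₀ hstar ω hsmooth hx (v ∘ i.succAbove) (v i),
      intervalIntegral.integral_add (intP i) (intQ i)]
  -- step 2 : the p(dω) term
  have hp : pOp x₀ (dOp (fval ω)) x v
      = (∫ t in (0:ℝ)..1, t^(m+1) * fderiv ℝ (fun y => fval ω y v)
            (x₀ + t • (x - x₀)) (x - x₀))
        + ∑ i : Fin (m+1), (-1:ℝ)^((i:ℕ)+1) *
          ∫ t in (0:ℝ)..1, t^(m+1) * fderiv ℝ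
            (fun y => fval ω y (Fin.cons (x - x₀) (v ∘ i.succAbove)))
            (x₀ + t • (x - x₀)) (v i) := by
    have hin : (fun t : ℝ => t^(m+1) * dOp (fval ω) (x₀ + t • (x - x₀))
        (Fin.cons (x - x₀) v))
        = fun t : ℝ => (t^(m+1) * fderiv ℝ (fun y => fval ω y v)
              (x₀ + t • (x - x₀)) (x - x₀))
          + ∑ i : Fin (m+1), (-1:ℝ)^((i:ℕ)+1) *
            (t^(m+1) * fderiv ℝ
              (fun y => fval ω y (Fin.cons (x - x₀) (v ∘ i.succAbove)))
              (x₀ + t • (x - x₀)) (v i)) := by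
      funext t
      simp only [dOp]
      rw [Fin.sum_univ_succ, comp_succAbove_zero (x - x₀) v]
      simp only [Fin.cons_zero, Fin.cons_succ, Fin.val_zero, Fin.val_succ, pow_zero, one_mul]
      rw [mul_add, Finset.mul_sum]
      congr 1
      refine Finset.sum_congr rfl fun i _ => ?_
      rw [comp_succAbove_succ (x - x₀) v i]
      ring
    have intQsum : IntervalIntegrable (fun t => ∑ i : Fin (m+1), (-1:ℝ)^((i:ℕ)+1) *
        (t^(m+1) * fderiv ℝ (fun y => fval ω y (Fin.cons (x - x₀) (v ∘ i.succAbove)))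
          (x₀ + t • (x - x₀)) (v i))) volume 0 1 := by
      apply ContinuousOn.intervalIntegrable
      rw [huIcc]
      exact continuousOn_finset_sum Finset.univ fun i _ =>
        continuousOn_const.mul ((continuousOn_pow (m+1)).mul (contD _ _))
    simp only [pOp]
    rw [hin, intervalIntegral.integral_add intR intQsum,
      intervalIntegral.integral_finset_sum (fun i _ => (intQ i).const_mul _)]
    congr 1
    exact Finset.sum_congr rfl fun i _ => intervalIntegral.integral_const_mul _ _
  -- step 3 : simplify hd using the alternating sign
  have hPval : ∀ i : Fin (m+1), (-1:ℝ)^(i:ℕ) *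
      (∫ t in (0:ℝ)..1, t^m * fval ω (x₀ + t • (x - x₀)) (Fin.cons (v i) (v ∘ i.succAbove)))
      = ∫ t in (0:ℝ)..1, t^m * fval ω (x₀ + t • (x - x₀)) v := by
    intro i
    have h1 : (fun t : ℝ => t^m * fval ω (x₀ + t • (x - x₀))
        (Fin.cons (v i) (v ∘ i.succAbove)))
        = fun t : ℝ => (-1:ℝ)^(i:ℕ) * (t^m * fval ω (x₀ + t • (x - x₀)) v) := by
      funext t
      rw [show fval ω (x₀ + t • (x - x₀)) (Fin.cons (v i) (v ∘ i.succAbove))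
          = (-1:ℝ)^(i:ℕ) * fval ω (x₀ + t • (x - x₀)) v from alt_sign _ v i]
      ring
    rw [h1, intervalIntegral.integral_const_mul, ← mul_assoc, ← mul_pow]
    norm_num
  have hd2 : dOp (pOp x₀ (fval ω)) x v
      = ((m:ℝ)+1) * (∫ t in (0:ℝ)..1, t^m * fval ω (x₀ + t • (x - x₀)) v)
        + ∑ i : Fin (m+1), (-1:ℝ)^(i:ℕ) *
          ∫ t in (0:ℝ)..1, t^(m+1) * fderiv ℝ
            (fun y => fval ω y (Fin.cons (x - x₀) (v ∘ i.succAbove)))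
            (x₀ + t • (x - x₀)) (v i) := by
    rw [hd]
    rw [show (∑ i : Fin (m+1), (-1:ℝ)^(i:ℕ) *
        ((∫ t in (0:ℝ)..1, t^m * fval ω (x₀ + t • (x - x₀)) (Fin.cons (v i) (v ∘ i.succAbove)))
          + ∫ t in (0:ℝ)..1, t^(m+1) * fderiv ℝ
              (fun y => fval ω y (Fin.cons (x - x₀) (v ∘ i.succAbove)))
              (x₀ + t • (x - x₀)) (v i)))
        = ∑ i : Fin (m+1), ((-1:ℝ)^(i:ℕ) *
            (∫ t in (0:ℝ)..1, t^m * fval ω (x₀ + t • (x - x₀))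
              (Fin.cons (v i) (v ∘ i.succAbove)))
          + (-1:ℝ)^(i:ℕ) *
            ∫ t in (0:ℝ)..1, t^(m+1) * fderiv ℝ
              (fun y => fval ω y (Fin.cons (x - x₀) (v ∘ i.succAbove)))
              (x₀ + t • (x - x₀)) (v i)) from
      Finset.sum_congr rfl fun i _ => mul_add _ _ _]
    rw [Finset.sum_add_distrib]
    congr 1
    rw [show (∑ i : Fin (m+1), (-1:ℝ)^(i:ℕ) *
        (∫ t in (0:ℝ)..1, t^m * fval ω (x₀ + t • (x - x₀))
          (Fin.cons (v i) (v ∘ i.succAbove))))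
        = ∑ _i : Fin (m+1), (∫ t in (0:ℝ)..1, t^m * fval ω (x₀ + t • (x - x₀)) v) from
      Finset.sum_congr rfl fun i _ => hPval i]
    rw [Finset.sum_const, Finset.card_univ, Fintype.card_fin, nsmul_eq_mul]
    push_cast
    ring
  have hp2 : pOp x₀ (dOp (fval ω)) x v
      = (∫ t in (0:ℝ)..1, t^(m+1) * fderiv ℝ (fun y => fval ω y v)
            (x₀ + t • (x - x₀)) (x - x₀))
        - ∑ i : Fin (m+1), (-1:ℝ)^(i:ℕ) *
          ∫ t in (0:ℝ)..1, t^(m+1) * fderiv ℝ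
            (fun y => fval ω y (Fin.cons (x - x₀) (v ∘ i.succAbove)))
            (x₀ + t • (x - x₀)) (v i) := by
    rw [hp]
    rw [show (∑ i : Fin (m+1), (-1:ℝ)^((i:ℕ)+1) *
        ∫ t in (0:ℝ)..1, t^(m+1) * fderiv ℝ
          (fun y => fval ω y (Fin.cons (x - x₀) (v ∘ i.succAbove)))
          (x₀ + t • (x - x₀)) (v i))
        = ∑ i : Fin (m+1), -((-1:ℝ)^(i:ℕ) *
          ∫ t in (0:ℝ)..1, t^(m+1) * fderiv ℝ
            (fun y => fval ω y (Fin.cons (x - x₀) (v ∘ i.succAbove)))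
            (x₀ + t • (x - x₀)) (v i)) from
      Finset.sum_congr rfl fun i _ => by ring]
    rw [Finset.sum_neg_distrib]
    ring
  -- step 4 : FTC
  have ftc : (∫ t in (0:ℝ)..1, (((m:ℝ)+1) * t^m * fval ω (x₀ + t • (x - x₀)) v
        + t^(m+1) * fderiv ℝ (fun y => fval ω y v) (x₀ + t • (x - x₀)) (x - x₀)))
      = fval ω x v := by
    have hderiv : ∀ t ∈ Set.uIcc (0:ℝ) 1,
        HasDerivAt (fun s : ℝ => s^(m+1) * fval ω (x₀ + s • (x - x₀)) v)
          (((m:ℝ)+1) * t^m * fval ω (x₀ + t • (x - x₀)) v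
            + t^(m+1) * fderiv ℝ (fun y => fval ω y v) (x₀ + t • (x - x₀)) (x - x₀)) t := by
      intro t ht
      have htΩ : x₀ + t • (x - x₀) ∈ Ω := hstar x hx t (huIcc ▸ ht)
      have hγ : HasDerivAt (fun s : ℝ => x₀ + s • (x - x₀)) (x - x₀) t := by
        have h1 : HasDerivAt (fun s : ℝ => s • (x - x₀)) ((1:ℝ) • (x - x₀)) t :=
          (hasDerivAt_id t).smul_const (x - x₀)
        rw [one_smul] at h1
        exact h1.const_add x₀
      have hout : HasFDerivAt (fun y => fval ω y v)
          (fderiv ℝ (fun y => fval ω y v) (x₀ + t • (x - x₀))) (x₀ + t • (x - x₀)) :=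
        (((hsmooth v).differentiableOn (by simp)).differentiableAt
          (hΩ.mem_nhds htΩ)).hasFDerivAt
      have hcomp : HasDerivAt (fun s : ℝ => fval ω (x₀ + s • (x - x₀)) v)
          (fderiv ℝ (fun y => fval ω y v) (x₀ + t • (x - x₀)) (x - x₀)) t :=
        by have := hout.comp_hasDerivAt t hγ; exact this
      have hmul := (hasDerivAt_pow (m+1) t).mul hcomp
      refine hmul.congr_deriv ?_
      norm_num
    have hcont : IntervalIntegrable
        (fun t : ℝ => ((m:ℝ)+1) * t^m * fval ω (x₀ + t • (x - x₀)) v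
          + t^(m+1) * fderiv ℝ (fun y => fval ω y v) (x₀ + t • (x - x₀)) (x - x₀))
        volume 0 1 := by
      apply ContinuousOn.intervalIntegrable
      rw [huIcc]
      exact ((continuousOn_const.mul (continuousOn_pow m)).mul (contf v)).add
        ((continuousOn_pow (m+1)).mul (contD v (x - x₀)))
    rw [intervalIntegral.integral_eq_sub_of_hasDerivAt hderiv hcont]
    norm_num
  -- assemble
  have h5 : ((m:ℝ)+1) * (∫ t in (0:ℝ)..1, t^m * fval ω (x₀ + t • (x - x₀)) v)
      + (∫ t in (0:ℝ)..1, t^(m+1) * fderiv ℝ (fun y => fval ω y v)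
          (x₀ + t • (x - x₀)) (x - x₀))
      = fval ω x v := by
    rw [← intervalIntegral.integral_const_mul,
      ← intervalIntegral.integral_add (intA.const_mul _) intR, ← ftc]
    exact intervalIntegral.integral_congr fun t _ => by ring
  rw [hd2, hp2]
  linarith [h5]
end
end

section
/- On ℝⁿ, the complex of polynomial differential forms P_r Λ⁰ → P_{r−1} Λ¹ → ⋯ → P_{r−n} Λⁿ with the exterior derivative is exact at every position except the leftmost, where the kernel consists of the constants. -/
open scoped BigOperators

noncomputable section

/-- `ω` belongs to `P_s Λ^k`: its coefficients are polynomials of total degree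
at most `s` (for `s < 0` this forces `ω = 0`, i.e. `P_s = 0`). -/
def MemP {n k : ℕ} (s : ℤ) (ω : DForm n k) : Prop :=
  ∀ v : Fin k → (Fin n → ℝ), ∃ p : MvPolynomial (Fin n) ℝ,
    (∀ x, fval ω x v = MvPolynomial.eval x p) ∧
    (p = 0 ∨ (p.totalDegree : ℤ) ≤ s)

/-! ### Auxiliary lemmas -/

open MvPolynomial in
/-- Evaluation of a multivariate polynomial is differentiable. -/
theorem aux_eval_differentiable {n : ℕ} (p : MvPolynomial (Fin n) ℝ) :
    Differentiable ℝ (fun x : Fin n → ℝ => MvPolynomial.eval x p) := by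
  induction p using MvPolynomial.induction_on with
  | C a => simpa using differentiable_const a
  | add p q hp hq => simpa using hp.fun_add hq
  | mul_X p i hp =>
    simp only [MvPolynomial.eval_mul, MvPolynomial.eval_X]
    exact hp.mul ((ContinuousLinearMap.proj i : (Fin n → ℝ) →L[ℝ] ℝ).differentiable)

/-- Restriction of an `MvPolynomial` to the line `t ↦ t • x`, as a one-variable
polynomial. -/
def aux_lineq {n : ℕ} (x : Fin n → ℝ) (p : MvPolynomial (Fin n) ℝ) : Polynomial ℝ :=
  MvPolynomial.eval₂ Polynomial.C (fun i => Polynomial.C (x i) * Polynomial.X) p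

theorem aux_lineq_eval {n : ℕ} (x : Fin n → ℝ) (p : MvPolynomial (Fin n) ℝ) (t : ℝ) :
    Polynomial.eval t (aux_lineq x p) = MvPolynomial.eval (t • x) p := by
  induction p using MvPolynomial.induction_on with
  | C a => simp [aux_lineq]
  | add p q hp hq =>
    simp only [aux_lineq, MvPolynomial.eval₂_add, Polynomial.eval_add, map_add] at *
    rw [hp, hq]
  | mul_X p i hp =>
    simp only [aux_lineq, MvPolynomial.eval₂_mul, MvPolynomial.eval₂_X, Polynomial.eval_mul,
      Polynomial.eval_C, Polynomial.eval_X, map_mul, MvPolynomial.eval_X] at *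
    rw [hp]; ring_nf; rw [Pi.smul_apply, smul_eq_mul]; ring

theorem aux_lineq_natDegree {n : ℕ} (x : Fin n → ℝ) (p : MvPolynomial (Fin n) ℝ) :
    (aux_lineq x p).natDegree ≤ p.totalDegree := by
  rw [aux_lineq, MvPolynomial.eval₂_eq]
  apply Polynomial.natDegree_sum_le_of_forall_le
  intro d hd
  calc (Polynomial.C (MvPolynomial.coeff d p) *
        ∏ i ∈ d.support, (Polynomial.C (x i) * Polynomial.X) ^ d i).natDegree
      ≤ (∏ i ∈ d.support, (Polynomial.C (x i) * Polynomial.X) ^ d i).natDegree :=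
        Polynomial.natDegree_C_mul_le _ _
    _ ≤ ∑ i ∈ d.support, ((Polynomial.C (x i) * Polynomial.X) ^ d i).natDegree :=
        Polynomial.natDegree_prod_le _ _
    _ ≤ ∑ i ∈ d.support, d i := by
        apply Finset.sum_le_sum
        intro i _
        calc ((Polynomial.C (x i) * Polynomial.X) ^ d i).natDegree
            ≤ d i * (Polynomial.C (x i) * Polynomial.X).natDegree :=
              Polynomial.natDegree_pow_le
          _ ≤ d i * 1 := by
              gcongr
              calc (Polynomial.C (x i) * Polynomial.X).natDegree
                  ≤ (Polynomial.C (x i)).natDegree + Polynomial.X.natDegree :=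
                    Polynomial.natDegree_mul_le
                _ ≤ 1 := by simp
          _ = d i := mul_one _
    _ ≤ p.totalDegree := MvPolynomial.le_totalDegree hd

/-- Directional derivative of a polynomial along the ray through `x`. -/
theorem aux_fderiv_line {n : ℕ} (x : Fin n → ℝ) (p : MvPolynomial (Fin n) ℝ) (s : ℝ) :
    fderiv ℝ (fun y => MvPolynomial.eval y p) (s • x) x =
      Polynomial.eval s (Polynomial.derivative (aux_lineq x p)) := by
  have h1 : HasDerivAt (fun t : ℝ => MvPolynomial.eval (t • x) p)
      (fderiv ℝ (fun y => MvPolynomial.eval y p) (s • x) x) s := by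
    have hsm : HasDerivAt (fun t : ℝ => t • x) ((1 : ℝ) • x) s :=
      (hasDerivAt_id s).smul_const x
    simpa [Function.comp_def] using
      ((aux_eval_differentiable p).differentiableAt.hasFDerivAt).comp_hasDerivAt s hsm
  have h2 : HasDerivAt (fun t : ℝ => MvPolynomial.eval (t • x) p)
      (Polynomial.eval s (Polynomial.derivative (aux_lineq x p))) s := by
    have : (fun t : ℝ => MvPolynomial.eval (t • x) p)
        = fun t => Polynomial.eval t (aux_lineq x p) :=
      funext fun t => (aux_lineq_eval x p t).symm
    rw [this]
    exact Polynomial.hasDerivAt _ _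
  exact h1.unique h2

/-- Expansion of an alternating map along the first slot, in coordinates. -/
theorem aux_cons_expand {n j : ℕ} (f : (Fin n → ℝ) [⋀^Fin (j+1)]→ₗ[ℝ] ℝ)
    (x : Fin n → ℝ) (w : Fin j → (Fin n → ℝ)) :
    f (Fin.cons x w) = ∑ l, x l * f (Fin.cons (Pi.single l (1:ℝ)) w) := by
  have h0 : ∀ z : Fin n → ℝ, (Fin.cons z w : Fin (j+1) → Fin n → ℝ)
      = Function.update (Fin.cons x w : Fin (j+1) → Fin n → ℝ) 0 z := by
    intro z; funext i
    refine Fin.cases (by simp) (fun i => ?_) i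
    rw [Function.update_of_ne (Fin.succ_ne_zero i)]
    simp
  have key : ∀ z : Fin n → ℝ, f (Fin.cons z w)
      = f (Function.update (Fin.cons x w : Fin (j+1) → Fin n → ℝ) 0 z) :=
    fun z => congrArg f (h0 z)
  have hx : x = ∑ l, x l • (Pi.single l (1:ℝ) : Fin n → ℝ) := by
    ext i; simp [Pi.single_apply]
  rw [key x, congrArg (Function.update (Fin.cons x w : Fin (j+1) → Fin n → ℝ) 0) hx,
    f.map_update_sum]
  apply Finset.sum_congr rfl
  intro l _
  rw [f.map_update_smul, ← key]
  simp

/-- Moving the value `v a` from position `a` to the front costs a sign `(-1)^a`. -/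
theorem aux_cons_cycle {j : ℕ} {n : ℕ} (g : (Fin n → ℝ) [⋀^Fin (j+1)]→ₗ[ℝ] ℝ)
    (v : Fin (j+1) → (Fin n → ℝ)) (a : Fin (j+1)) :
    g (Fin.cons (v a) (v ∘ a.succAbove)) = (-1:ℝ)^(a:ℕ) * g v := by
  have hco : (Fin.cons (v a) (v ∘ a.succAbove) : Fin (j+1) → Fin n → ℝ)
      = v ∘ (a.cycleRange).symm := by
    funext i
    refine Fin.cases ?_ (fun i => ?_) i
    · simp [Fin.cycleRange_symm_zero]
    · simp [Fin.cycleRange_symm_succ]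
  rw [hco, g.map_perm v (a.cycleRange).symm, Equiv.Perm.sign_symm, Fin.sign_cycleRange]
  rw [Units.smul_def]
  push_cast
  rw [zsmul_eq_mul]
  push_cast
  ring

/-- Existence of quadrature weights exact for `∫₀¹ t^{j+d} dt` up to degree `R`. -/
theorem aux_quad_weights (R j : ℕ) :
    ∃ c : Fin (R+1) → ℝ, ∀ d : ℕ, d ≤ R →
      ∑ m, c m * ((m:ℝ)+1)^d = 1/((j:ℝ)+1+d) := by
  set s : Fin (R+1) → ℝ := fun m => (m:ℝ)+1 with hs
  have hsinj : Function.Injective s := by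
    intro a b hab
    have h2 : ((a:ℕ):ℝ) = ((b:ℕ):ℝ) := by simpa [hs] using hab
    exact Fin.ext (by exact_mod_cast h2)
  set M : Matrix (Fin (R+1)) (Fin (R+1)) ℝ := Matrix.transpose (Matrix.vandermonde s) with hM
  have hdet : IsUnit M.det := by
    rw [hM, Matrix.det_transpose]
    exact isUnit_iff_ne_zero.mpr (Matrix.det_vandermonde_ne_zero_iff.mpr hsinj)
  set b : Fin (R+1) → ℝ := fun d => 1/((j:ℝ)+1+d) with hb
  refine ⟨M⁻¹.mulVec b, ?_⟩
  intro d hd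
  have hMc : M.mulVec (M⁻¹.mulVec b) = b := by
    rw [Matrix.mulVec_mulVec, Matrix.mul_nonsing_inv M hdet, Matrix.one_mulVec]
  have := congrFun hMc ⟨d, Nat.lt_succ_of_le hd⟩
  rw [Matrix.mulVec] at this
  simpa [hM, hb, dotProduct, Matrix.vandermonde, mul_comm] using this

theorem aux_degsum_eq {n : ℕ} (d : Fin n →₀ ℕ) : (d.sum fun _ e => e) = ∑ i, d i :=
  Finsupp.sum_fintype _ _ (fun _ => rfl)

open MvPolynomial in
/-- The algebraic Koszul scaling: divide each monomial of degree `D` by `j+1+D`. -/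
def aux_Tmap {n : ℕ} (j : ℕ) (p : MvPolynomial (Fin n) ℝ) : MvPolynomial (Fin n) ℝ :=
  ∑ d ∈ p.support, MvPolynomial.monomial d ((1/((j:ℝ)+1+(∑ i, d i))) * p.coeff d)

open MvPolynomial in
theorem aux_Tmap_totalDegree {n : ℕ} (j : ℕ) (p : MvPolynomial (Fin n) ℝ) :
    (aux_Tmap j p).totalDegree ≤ p.totalDegree := by
  apply totalDegree_finsetSum_le
  intro d hd
  refine (totalDegree_monomial_le _ _).trans ?_
  exact le_totalDegree hd

open MvPolynomial in
theorem aux_eval_smul_expand {n : ℕ} (t : ℝ) (x : Fin n → ℝ) (p : MvPolynomial (Fin n) ℝ) :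
    eval (t • x) p = ∑ d ∈ p.support, p.coeff d * t^(∑ i, d i) * ∏ i, x i ^ d i := by
  rw [eval_eq']
  apply Finset.sum_congr rfl
  intro d _
  have : ∏ i, (t • x) i ^ d i = t^(∑ i, d i) * ∏ i, x i ^ d i := by
    simp only [Pi.smul_apply, smul_eq_mul, mul_pow]
    rw [Finset.prod_mul_distrib, Finset.prod_pow_eq_pow_sum]
  rw [this, mul_assoc]

open MvPolynomial in
theorem aux_Tmap_eval {n R j : ℕ} (c : Fin (R+1) → ℝ)
    (hc : ∀ d : ℕ, d ≤ R → ∑ m, c m * ((m:ℝ)+1)^d = 1/((j:ℝ)+1+d))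
    (p : MvPolynomial (Fin n) ℝ) (hp : p.totalDegree ≤ R) (x : Fin n → ℝ) :
    ∑ m, c m * eval (((m:ℝ)+1) • x) p = eval x (aux_Tmap j p) := by
  have hrhs : eval x (aux_Tmap j p)
      = ∑ d ∈ p.support, (1/((j:ℝ)+1+(∑ i, d i))) * p.coeff d * ∏ i, x i ^ d i := by
    rw [aux_Tmap, map_sum]
    apply Finset.sum_congr rfl
    intro d _
    rw [eval_monomial]
    congr 1
    exact Finsupp.prod_fintype _ _ (fun _ => pow_zero _)
  rw [hrhs]
  simp only [aux_eval_smul_expand, Finset.mul_sum]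
  rw [Finset.sum_comm]
  apply Finset.sum_congr rfl
  intro d hd
  have hdeg : (∑ i, d i) ≤ R := by
    rw [← aux_degsum_eq]; exact (le_totalDegree hd).trans hp
  calc ∑ m, c m * (p.coeff d * ((m:ℝ)+1)^(∑ i, d i) * ∏ i, x i ^ d i)
      = (∑ m, c m * ((m:ℝ)+1)^(∑ i, d i)) * (p.coeff d * ∏ i, x i ^ d i) := by
        rw [Finset.sum_mul]; apply Finset.sum_congr rfl; intro m _; ring
    _ = (1/((j:ℝ)+1+(∑ i, d i))) * (p.coeff d * ∏ i, x i ^ d i) := by rw [hc _ hdeg]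
    _ = 1/((j:ℝ)+1+(∑ i, d i)) * p.coeff d * ∏ i, x i ^ d i := by ring

open Polynomial in
theorem aux_quad_eval {R j : ℕ} (c : Fin (R+1) → ℝ)
    (hc : ∀ d : ℕ, d ≤ R → ∑ m, c m * ((m:ℝ)+1)^d = 1/((j:ℝ)+1+d))
    (u : Polynomial ℝ) (hu : u.natDegree ≤ R) :
    ∑ m, c m * u.eval ((m:ℝ)+1)
      = ∑ d ∈ Finset.range (R+1), u.coeff d * (1/((j:ℝ)+1+d)) := by
  have he : ∀ z : ℝ, u.eval z = ∑ d ∈ Finset.range (R+1), u.coeff d * z^d :=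
    fun z => eval_eq_sum_range' (Nat.lt_succ_of_le hu) z
  simp only [he, Finset.mul_sum]
  rw [Finset.sum_comm]
  apply Finset.sum_congr rfl
  intro d hd
  rw [Finset.mem_range] at hd
  calc ∑ m, c m * (u.coeff d * ((m:ℝ)+1)^d)
      = (∑ m, c m * ((m:ℝ)+1)^d) * u.coeff d := by
        rw [Finset.sum_mul]; apply Finset.sum_congr rfl; intro m _; ring
    _ = _ := by rw [hc _ (Nat.lt_succ_iff.mp hd)]; ring

open Polynomial in
/-- Key quadrature identity: the weighted sum of `t q'(t) + (j+1) q(t)` at the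
nodes equals `q(1)` (this is `∫₀¹ (t^{j+1} q(t))' dt = q(1)`). -/
theorem aux_key_quad {R j : ℕ} (c : Fin (R+1) → ℝ)
    (hc : ∀ d : ℕ, d ≤ R → ∑ m, c m * ((m:ℝ)+1)^d = 1/((j:ℝ)+1+d))
    (q : Polynomial ℝ) (hq : q.natDegree ≤ R) :
    ∑ m, c m * (((m:ℝ)+1) * (Polynomial.derivative q).eval ((m:ℝ)+1)
        + ((j:ℝ)+1) * q.eval ((m:ℝ)+1)) = q.eval 1 := by
  set u : Polynomial ℝ := ((j:ℝ)+1) • q + Polynomial.X * Polynomial.derivative q with hu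
  have hueval : ∀ z : ℝ, u.eval z
      = z * (Polynomial.derivative q).eval z + ((j:ℝ)+1) * q.eval z := by
    intro z; simp [hu]; ring
  have hudeg : u.natDegree ≤ R := by
    refine (natDegree_add_le _ _).trans (max_le ((natDegree_smul_le _ _).trans hq) ?_)
    by_cases hdq : Polynomial.derivative q = 0
    · simp [hdq]
    · have h1 : (Polynomial.X * Polynomial.derivative q).natDegree
          ≤ 1 + (Polynomial.derivative q).natDegree := by
        refine (natDegree_mul_le).trans ?_
        simp
      have h2 : (Polynomial.derivative q).natDegree ≤ q.natDegree - 1 :=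
        natDegree_derivative_le q
      have h3 : 1 ≤ q.natDegree := by
        by_contra h
        push_neg at h
        interval_cases hqn : q.natDegree
        · exact hdq (by
            have := Polynomial.eq_C_of_natDegree_eq_zero hqn
            rw [this]; simp)
      omega
  have hcoeff : ∀ d ∈ Finset.range (R+1), u.coeff d * (1/((j:ℝ)+1+d)) = q.coeff d := by
    intro d _
    have hpos : ((j:ℝ)+1+d) ≠ 0 := by positivity
    have : u.coeff d = ((j:ℝ)+1+d) * q.coeff d := by
      rcases d with _ | e
      · simp [hu, Polynomial.mul_coeff_zero]
      · simp only [hu, Polynomial.coeff_add, Polynomial.coeff_smul, Polynomial.coeff_X_mul,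
          Polynomial.coeff_derivative, smul_eq_mul]
        push_cast
        ring
    rw [this]
    field_simp
  calc ∑ m, c m * (((m:ℝ)+1) * (Polynomial.derivative q).eval ((m:ℝ)+1)
        + ((j:ℝ)+1) * q.eval ((m:ℝ)+1))
      = ∑ m, c m * u.eval ((m:ℝ)+1) := by simp only [hueval]
    _ = ∑ d ∈ Finset.range (R+1), u.coeff d * (1/((j:ℝ)+1+d)) := aux_quad_eval c hc u hudeg
    _ = ∑ d ∈ Finset.range (R+1), q.coeff d := Finset.sum_congr rfl hcoeff
    _ = q.eval 1 := by
        rw [eval_eq_sum_range' (Nat.lt_succ_of_le hq) 1]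
        simp

open MvPolynomial in
theorem aux_eta_hasFDeriv {n r : ℕ} (c : Fin (r+1) → ℝ) (Q : Fin n → MvPolynomial (Fin n) ℝ)
    (x : Fin n → ℝ) :
    HasFDerivAt
      (fun y : Fin n → ℝ => ∑ m : Fin (r+1), c m * ∑ l, y l * eval (((m:ℝ)+1) • y) (Q l))
      (∑ m : Fin (r+1), c m • ∑ l : Fin n,
        (x l • ((fderiv ℝ (fun z => eval z (Q l)) (((m:ℝ)+1) • x)).comp
            (((m:ℝ)+1) • ContinuousLinearMap.id ℝ (Fin n → ℝ)))
          + eval (((m:ℝ)+1) • x) (Q l) • (ContinuousLinearMap.proj l))) x := by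
  apply HasFDerivAt.fun_sum
  intro m _
  apply HasFDerivAt.const_mul
  apply HasFDerivAt.fun_sum
  intro l _
  have h1 : HasFDerivAt (fun y : Fin n → ℝ => y l)
      (ContinuousLinearMap.proj l : (Fin n → ℝ) →L[ℝ] ℝ) x := by
    simpa using hasFDerivAt_apply l x
  have hin : HasFDerivAt (fun y : Fin n → ℝ => ((m:ℝ)+1) • y)
      (((m:ℝ)+1) • ContinuousLinearMap.id ℝ (Fin n → ℝ)) x := by
    simpa using HasFDerivAt.const_smul (𝕜 := ℝ) (R := ℝ) (hasFDerivAt_id x) (((m:ℝ)+1))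
  have hF : HasFDerivAt (fun z : Fin n → ℝ => eval z (Q l))
      (fderiv ℝ (fun z => eval z (Q l)) (((m:ℝ)+1) • x)) (((m:ℝ)+1) • x) :=
    ((aux_eval_differentiable (Q l)) _).hasFDerivAt
  have h2 : HasFDerivAt (fun y : Fin n → ℝ => eval (((m:ℝ)+1) • y) (Q l))
      ((fderiv ℝ (fun z => eval z (Q l)) (((m:ℝ)+1) • x)).comp
        (((m:ℝ)+1) • ContinuousLinearMap.id ℝ (Fin n → ℝ))) x := hF.comp x hin
  exact h1.mul h2

open MvPolynomial in
theorem aux_eta_fderiv {n r : ℕ} (c : Fin (r+1) → ℝ) (Q : Fin n → MvPolynomial (Fin n) ℝ)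
    (x u : Fin n → ℝ) :
    fderiv ℝ (fun y : Fin n → ℝ =>
        ∑ m : Fin (r+1), c m * ∑ l, y l * eval (((m:ℝ)+1) • y) (Q l)) x u
    = ∑ m : Fin (r+1), c m * ∑ l : Fin n,
        (x l * (((m:ℝ)+1) * fderiv ℝ (fun z => eval z (Q l)) (((m:ℝ)+1) • x) u)
          + eval (((m:ℝ)+1) • x) (Q l) * u l) := by
  rw [(aux_eta_hasFDeriv c Q x).fderiv]
  simp only [ContinuousLinearMap.sum_apply, ContinuousLinearMap.smul_apply,
    ContinuousLinearMap.add_apply, ContinuousLinearMap.coe_comp', Function.comp_apply,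
    ContinuousLinearMap.coe_smul', Pi.smul_apply, ContinuousLinearMap.coe_id', id_eq,
    ContinuousLinearMap.proj_apply, smul_eq_mul, map_smul]

theorem aux_altsum_apply {n k : ℕ} {ι : Type*} (s : Finset ι)
    (f : ι → ((Fin n → ℝ) [⋀^Fin k]→ₗ[ℝ] ℝ)) (w : Fin k → (Fin n → ℝ)) :
    (∑ i ∈ s, f i) w = ∑ i ∈ s, f i w := by
  induction s using Finset.cons_induction with
  | empty => simp
  | cons a s ha ih => simp [Finset.sum_cons, ih]

/-- The polynomial de Rham complex
`P_r Λ⁰ → P_{r−1} Λ¹ → ⋯ → P_{r−n} Λⁿ` on `ℝⁿ` is exact at every position except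
the leftmost, where the kernel consists of the constants. -/
theorem poly_deRham_exact (n r : ℕ) :
    (∀ ω : DForm n 0, MemP (r : ℤ) ω →
      (∀ (x : Fin n → ℝ) (v : Fin 1 → (Fin n → ℝ)), dOp (fval ω) x v = 0) →
      ∃ c : ℝ, ∀ (x : Fin n → ℝ) (v : Fin 0 → (Fin n → ℝ)), fval ω x v = c) ∧
    (∀ j : ℕ, j + 1 ≤ n → ∀ ω : DForm n (j + 1),
      MemP ((r : ℤ) - (j + 1)) ω →
      (∀ (x : Fin n → ℝ) (v : Fin (j + 2) → (Fin n → ℝ)), dOp (fval ω) x v = 0) →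
      ∃ η : DForm n j, MemP ((r : ℤ) - j) η ∧
        ∀ (x : Fin n → ℝ) (v : Fin (j + 1) → (Fin n → ℝ)),
          dOp (fval η) x v = fval ω x v) := by
  constructor
  · -- the leftmost spot : closed 0-forms are constant
    intro ω hω hcl
    obtain ⟨p, hp, -⟩ := hω (fun i => i.elim0)
    have hωf : ∀ (y : Fin n → ℝ) (v : Fin 0 → Fin n → ℝ),
        fval ω y v = MvPolynomial.eval y p := by
      intro y v
      rw [show v = (fun i => i.elim0) from funext fun i => i.elim0]
      exact hp y
    have hzero : ∀ z, fderiv ℝ (fun y : Fin n → ℝ => MvPolynomial.eval y p) z = 0 := by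
      intro z
      ext u
      have h := hcl z (fun _ => u)
      rw [dOp, Fin.sum_univ_one] at h
      have hfun : (fun y => fval ω y ((fun _ => u) ∘ (0 : Fin 1).succAbove))
          = (fun y : Fin n → ℝ => MvPolynomial.eval y p) :=
        funext fun y => hωf y _
      rw [hfun] at h
      simpa using h
    refine ⟨MvPolynomial.eval 0 p, fun x v => ?_⟩
    rw [hωf x v]
    exact is_const_of_fderiv_eq_zero (aux_eval_differentiable p) hzero x 0
  · -- exactness at the other spots
    intro j hj ω hω hcl
    choose P hP hPd using hω
    obtain ⟨c, hc⟩ := aux_quad_weights r j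
    -- the Koszul potential
    set η : DForm n j := fun x =>
      ∑ m : Fin (r+1), c m • ((ω (((m:ℝ)+1) • x)).curryLeft x) with hηdef
    have hωval : ∀ (z : Fin n → ℝ) (v : Fin (j+1) → Fin n → ℝ),
        (ω z) v = MvPolynomial.eval z (P v) := fun z v => hP v z
    have hωcons : ∀ (z x : Fin n → ℝ) (w : Fin j → Fin n → ℝ),
        (ω z) (Fin.cons x w)
          = ∑ l, x l * MvPolynomial.eval z (P (Fin.cons (Pi.single l 1) w)) := by
      intro z x w
      rw [aux_cons_expand (ω z) x w]
      exact Finset.sum_congr rfl fun l _ => by rw [hωval]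
    have hηval : ∀ (y : Fin n → ℝ) (w : Fin j → Fin n → ℝ),
        fval η y w = ∑ m : Fin (r+1), c m *
          ∑ l, y l * MvPolynomial.eval (((m:ℝ)+1) • y) (P (Fin.cons (Pi.single l 1) w)) := by
      intro y w
      show (∑ m : Fin (r+1), c m • ((ω (((m:ℝ)+1) • y)).curryLeft y)) w = _
      rw [aux_altsum_apply]
      apply Finset.sum_congr rfl
      intro m _
      rw [AlternatingMap.smul_apply, AlternatingMap.curryLeft_apply_apply, smul_eq_mul]
      rw [show (Matrix.vecCons y w) = Fin.cons y w from rfl, hωcons]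
    have hdegr : ∀ v : Fin (j+1) → Fin n → ℝ, (P v).totalDegree ≤ r := by
      intro v
      rcases hPd v with h0 | hle
      · simp [h0]
      · have h2 : ((P v).totalDegree : ℤ) ≤ (r : ℤ) := le_trans hle (by omega)
        exact_mod_cast h2
    have hmem : MemP ((r : ℤ) - j) η := by
      intro v
      refine ⟨∑ l, MvPolynomial.X l * aux_Tmap j (P (Fin.cons (Pi.single l 1) v)), ?_, ?_⟩
      · intro x
        rw [hηval x v, map_sum]
        simp only [Finset.mul_sum]
        rw [Finset.sum_comm]
        apply Finset.sum_congr rfl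
        intro l _
        rw [MvPolynomial.eval_mul, MvPolynomial.eval_X,
          ← aux_Tmap_eval c hc _ (hdegr (Fin.cons (Pi.single l 1) v)) x, Finset.mul_sum]
        apply Finset.sum_congr rfl
        intro m _
        ring
      · by_cases hrj : r < j + 1
        · left
          have hz : ∀ l : Fin n, P (Fin.cons (Pi.single l 1) v) = 0 := by
            intro l
            rcases hPd (Fin.cons (Pi.single l 1) v) with h0 | hle
            · exact h0
            · exfalso
              have : (0 : ℤ) ≤ ((P (Fin.cons (Pi.single l 1) v)).totalDegree : ℤ) :=
                Int.natCast_nonneg _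
              omega
          apply Finset.sum_eq_zero
          intro l _
          rw [hz l]
          simp [aux_Tmap]
        · right
          push_neg at hrj
          have hnat : (∑ l, MvPolynomial.X l *
              aux_Tmap j (P (Fin.cons (Pi.single l 1) v))).totalDegree ≤ r - j := by
            apply MvPolynomial.totalDegree_finsetSum_le
            intro l _
            by_cases h0 : P (Fin.cons (Pi.single l 1) v) = 0
            · rw [h0]
              simp [aux_Tmap]
            · rcases hPd (Fin.cons (Pi.single l 1) v) with h0' | hle
              · exact absurd h0' h0
              · have hD : (P (Fin.cons (Pi.single l 1) v)).totalDegree ≤ r - (j+1) := by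
                  omega
                refine (MvPolynomial.totalDegree_mul _ _).trans ?_
                have h1 : (MvPolynomial.X l : MvPolynomial (Fin n) ℝ).totalDegree ≤ 1 :=
                  le_of_eq (MvPolynomial.totalDegree_X l)
                have h2 := (aux_Tmap_totalDegree j (P (Fin.cons (Pi.single l 1) v))).trans hD
                omega
          calc ((∑ l, MvPolynomial.X l *
              aux_Tmap j (P (Fin.cons (Pi.single l 1) v))).totalDegree : ℤ)
              ≤ ((r - j : ℕ) : ℤ) := by exact_mod_cast hnat
            _ ≤ (r : ℤ) - j := by omega
    refine ⟨η, hmem, ?_⟩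
    intro x v
    -- notation
    set q : Polynomial ℝ := aux_lineq x (P v) with hq
    -- the first-slot polynomials for each `a`
    have hterm : ∀ a : Fin (j+1),
        fderiv ℝ (fun y => fval η y (v ∘ a.succAbove)) x (v a)
        = ∑ m : Fin (r+1), c m *
            (((m:ℝ)+1) * fderiv ℝ (fun y =>
                (ω y) (Fin.cons x (v ∘ a.succAbove))) (((m:ℝ)+1) • x) (v a)
              + (-1:ℝ)^(a:ℕ) * (ω (((m:ℝ)+1) • x)) v) := by
      intro a
      have hfun : (fun y => fval η y (v ∘ a.succAbove))
          = fun y : Fin n → ℝ => ∑ m : Fin (r+1), c m * ∑ l, y l *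
              MvPolynomial.eval (((m:ℝ)+1) • y)
                ((fun l => P (Fin.cons (Pi.single l 1) (v ∘ a.succAbove))) l) :=
        funext fun y => hηval y _
      rw [hfun, aux_eta_fderiv c _ x (v a)]
      apply Finset.sum_congr rfl
      intro m _
      congr 1
      rw [Finset.sum_add_distrib]
      congr 1
      · -- gradient part
        have hg : (fun y => (ω y) (Fin.cons x (v ∘ a.succAbove)))
            = fun y : Fin n → ℝ => ∑ l, x l *
                MvPolynomial.eval y (P (Fin.cons (Pi.single l 1) (v ∘ a.succAbove))) :=
          funext fun y => hωcons y x _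
        have hder : HasFDerivAt (fun y : Fin n → ℝ => ∑ l, x l *
              MvPolynomial.eval y (P (Fin.cons (Pi.single l 1) (v ∘ a.succAbove))))
            (∑ l : Fin n, x l • fderiv ℝ
              (fun z => MvPolynomial.eval z (P (Fin.cons (Pi.single l 1) (v ∘ a.succAbove))))
              (((m:ℝ)+1) • x)) (((m:ℝ)+1) • x) := by
          apply HasFDerivAt.fun_sum
          intro l _
          exact ((aux_eval_differentiable _).differentiableAt.hasFDerivAt).const_mul (x l)
        rw [hg, hder.fderiv]
        simp only [ContinuousLinearMap.sum_apply, ContinuousLinearMap.smul_apply, smul_eq_mul,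
          Finset.mul_sum]
        apply Finset.sum_congr rfl
        intro l _
        ring
      · -- alternating part
        have := aux_cons_cycle (ω (((m:ℝ)+1) • x)) v a
        rw [← this, hωcons (((m:ℝ)+1) • x) (v a) (v ∘ a.succAbove)]
        apply Finset.sum_congr rfl
        intro l _
        ring
    -- closedness gives the Euler-type identity
    have hclosed : ∀ m : Fin (r+1),
        ∑ a : Fin (j+1), (-1:ℝ)^(a:ℕ) * fderiv ℝ
            (fun y => (ω y) (Fin.cons x (v ∘ a.succAbove))) (((m:ℝ)+1) • x) (v a)
        = Polynomial.eval ((m:ℝ)+1) (Polynomial.derivative q) := by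
      intro m
      have h := hcl (((m:ℝ)+1) • x) (Fin.cons x v)
      rw [dOp, Fin.sum_univ_succ] at h
      have hcomp0 : (Fin.cons x v : Fin (j+2) → Fin n → ℝ) ∘ (0 : Fin (j+2)).succAbove
          = v := by
        funext b
        simp [Fin.succAbove_zero]
      have hcompa : ∀ a : Fin (j+1),
          (Fin.cons x v : Fin (j+2) → Fin n → ℝ) ∘ (Fin.succ a).succAbove
            = Fin.cons x (v ∘ a.succAbove) := by
        intro a
        funext b
        refine Fin.cases ?_ (fun b => ?_) b
        · simp [Fin.succ_succAbove_zero]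
        · simp [Fin.succ_succAbove_succ]
      rw [hcomp0] at h
      simp only [hcompa, Fin.cons_zero, Fin.cons_succ, Fin.val_succ, Fin.val_zero, pow_zero,
        one_mul, pow_succ] at h
      have hfv : (fun y => fval ω y v) = fun y => MvPolynomial.eval y (P v) :=
        funext fun y => hP v y
      rw [hfv, aux_fderiv_line x (P v) ((m:ℝ)+1)] at h
      have heq : ∑ a : Fin (j+1), (-1:ℝ)^(a:ℕ) * fderiv ℝ
            (fun y => fval ω y (Fin.cons x (v ∘ a.succAbove))) (((m:ℝ)+1) • x) (v a)
          = Polynomial.eval ((m:ℝ)+1) (Polynomial.derivative q) := by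
        have hsplit : ∑ a : Fin (j+1), (-1:ℝ)^(a:ℕ) * (-1) * fderiv ℝ
              (fun y => fval ω y (Fin.cons x (v ∘ a.succAbove))) (((m:ℝ)+1) • x) (v a)
            = -∑ a : Fin (j+1), (-1:ℝ)^(a:ℕ) * fderiv ℝ
              (fun y => fval ω y (Fin.cons x (v ∘ a.succAbove))) (((m:ℝ)+1) • x) (v a) := by
          rw [← Finset.sum_neg_distrib]
          apply Finset.sum_congr rfl
          intro a _
          ring
        rw [hsplit] at h
        linarith
      exact heq
    -- final computation
    rw [dOp]
    have hstep : ∀ a : Fin (j+1), (-1:ℝ)^(a:ℕ) *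
        fderiv ℝ (fun y => fval η y (v ∘ a.succAbove)) x (v a)
        = ∑ m : Fin (r+1), (c m * (((m:ℝ)+1) * ((-1:ℝ)^(a:ℕ) * fderiv ℝ (fun y =>
            (ω y) (Fin.cons x (v ∘ a.succAbove))) (((m:ℝ)+1) • x) (v a)))
          + c m * ((ω (((m:ℝ)+1) • x)) v)) := by
      intro a
      rw [hterm a, Finset.mul_sum]
      apply Finset.sum_congr rfl
      intro m _
      have hsq : (-1:ℝ)^(a:ℕ) * (-1:ℝ)^(a:ℕ) = 1 := by
        rw [← pow_add]
        exact Even.neg_one_pow ⟨(a:ℕ), rfl⟩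
      calc (-1:ℝ)^(a:ℕ) * (c m * (((m:ℝ)+1) * fderiv ℝ (fun y =>
            (ω y) (Fin.cons x (v ∘ a.succAbove))) (((m:ℝ)+1) • x) (v a)
              + (-1:ℝ)^(a:ℕ) * (ω (((m:ℝ)+1) • x)) v))
          = c m * (((m:ℝ)+1) * ((-1:ℝ)^(a:ℕ) * fderiv ℝ (fun y =>
            (ω y) (Fin.cons x (v ∘ a.succAbove))) (((m:ℝ)+1) • x) (v a)))
            + ((-1:ℝ)^(a:ℕ) * (-1:ℝ)^(a:ℕ)) * (c m * (ω (((m:ℝ)+1) • x)) v) := by ring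
        _ = _ := by rw [hsq]; ring
    calc ∑ a : Fin (j+1), (-1:ℝ)^(a:ℕ) *
          fderiv ℝ (fun y => fval η y (v ∘ a.succAbove)) x (v a)
        = ∑ a : Fin (j+1), ∑ m : Fin (r+1),
            (c m * (((m:ℝ)+1) * ((-1:ℝ)^(a:ℕ) * fderiv ℝ (fun y =>
              (ω y) (Fin.cons x (v ∘ a.succAbove))) (((m:ℝ)+1) • x) (v a)))
            + c m * ((ω (((m:ℝ)+1) • x)) v)) := Finset.sum_congr rfl fun a _ => hstep a
      _ = ∑ m : Fin (r+1), ∑ a : Fin (j+1),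
            (c m * (((m:ℝ)+1) * ((-1:ℝ)^(a:ℕ) * fderiv ℝ (fun y =>
              (ω y) (Fin.cons x (v ∘ a.succAbove))) (((m:ℝ)+1) • x) (v a)))
            + c m * ((ω (((m:ℝ)+1) • x)) v)) := Finset.sum_comm
      _ = ∑ m : Fin (r+1), c m * (((m:ℝ)+1) *
            Polynomial.eval ((m:ℝ)+1) (Polynomial.derivative q)
            + ((j:ℝ)+1) * Polynomial.eval ((m:ℝ)+1) q) := by
          apply Finset.sum_congr rfl
          intro m _
          rw [Finset.sum_add_distrib]
          have h1 : ∑ a : Fin (j+1), c m * (((m:ℝ)+1) * ((-1:ℝ)^(a:ℕ) * fderiv ℝ (fun y =>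
              (ω y) (Fin.cons x (v ∘ a.succAbove))) (((m:ℝ)+1) • x) (v a)))
              = c m * (((m:ℝ)+1) * Polynomial.eval ((m:ℝ)+1) (Polynomial.derivative q)) := by
            rw [← hclosed m, Finset.mul_sum, Finset.mul_sum]
          have h2 : ∑ _a : Fin (j+1), c m * ((ω (((m:ℝ)+1) • x)) v)
              = c m * (((j:ℝ)+1) * Polynomial.eval ((m:ℝ)+1) q) := by
            rw [Finset.sum_const, Finset.card_univ, Fintype.card_fin]
            rw [hωval, ← aux_lineq_eval x (P v) ((m:ℝ)+1)]
            push_cast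
            ring
          rw [h1, h2]
          ring
      _ = Polynomial.eval 1 q :=
          aux_key_quad c hc q ((aux_lineq_natDegree x (P v)).trans (hdegr v))
      _ = fval ω x v := by
          rw [hq, aux_lineq_eval x (P v) 1, one_smul]
          exact (hP v x).symm
end
end

section
/- For homogeneous polynomial k-forms of degree r on ℝⁿ with r + k > 0, the space decomposes as a direct sum H_r Λ^k = d(κ H_r Λ^k) ⊕ κ(d H_r Λ^k); equivalently H_r Λ^k = dH_{r+1}Λ^{k−1} ⊕ κH_{r−1}Λ^{k+1}. -/
open scoped BigOperators

noncomputable section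

/-- Koszul operator: contraction with the position (Euler) vector field. -/
def kOp {n k : ℕ} (ω : (Fin n → ℝ) → (Fin (k + 1) → (Fin n → ℝ)) → ℝ) :
    (Fin n → ℝ) → (Fin k → (Fin n → ℝ)) → ℝ :=
  fun x v => ω x (Fin.cons x v)

/-- `ω ∈ H_s Λ^k` with integer degree `s`: coefficients are homogeneous
polynomials of degree `s` (for `s < 0` this forces `ω = 0`). -/
def IsHomogZ {n k : ℕ} (s : ℤ) (ω : DForm n k) : Prop :=
  ∀ v : Fin k → (Fin n → ℝ), ∃ p : MvPolynomial (Fin n) ℝ,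
    (∀ x, fval ω x v = MvPolynomial.eval x p) ∧
    (p = 0 ∨ ∃ m : ℕ, (m : ℤ) = s ∧ p.IsHomogeneous m)


open Fin

lemma val_succAbove {k : ℕ} (i : Fin (k+1)) (j : Fin k) :
    ((i.succAbove j : Fin (k+1)) : ℕ) = if (j : ℕ) < (i : ℕ) then (j : ℕ) else (j : ℕ) + 1 := by
  rw [Fin.succAbove]
  rcases Nat.lt_or_ge (j : ℕ) (i : ℕ) with h | h
  · rw [if_pos (by simpa [Fin.lt_iff_val_lt_val] using h), if_pos h]; rfl
  · rw [if_neg (by simp [Fin.lt_iff_val_lt_val]; omega), if_neg (by omega)]; rfl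

lemma val_predAbove {k : ℕ} (j : Fin k) (i : Fin (k+1)) :
    ((j.predAbove i : Fin k) : ℕ) = if (i : ℕ) ≤ (j : ℕ) then (i : ℕ) else (i : ℕ) - 1 := by
  rw [Fin.predAbove]
  rcases Nat.lt_or_ge (j : ℕ) (i : ℕ) with h | h
  · rw [dif_pos (by simpa [Fin.lt_iff_val_lt_val] using h), if_neg (by omega)]; rfl
  · rw [dif_neg (by simp [Fin.lt_iff_val_lt_val]; omega), if_pos (by omega)]; rfl

lemma K1 {k : ℕ} (i : Fin (k+2)) (j : Fin (k+1)) (t : Fin k) :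
    i.succAbove (j.succAbove t) = (i.succAbove j).succAbove ((j.predAbove i).succAbove t) := by
  apply Fin.ext
  simp only [val_succAbove, val_predAbove]
  have hi := i.isLt; have hj := j.isLt; have ht := t.isLt
  split_ifs <;> omega

lemma K2pow {k : ℕ} (i : Fin (k+2)) (j : Fin (k+1)) :
    ((-1 : ℝ)) ^ ((i.succAbove j : ℕ) + (j.predAbove i : ℕ)) = -(-1 : ℝ) ^ ((i:ℕ) + (j:ℕ)) := by
  have h : ((i.succAbove j : ℕ) + (j.predAbove i : ℕ)) + 1 = (i : ℕ) + (j : ℕ)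
      ∨ ((i.succAbove j : ℕ) + (j.predAbove i : ℕ)) = (i : ℕ) + (j : ℕ) + 1 := by
    simp only [val_succAbove, val_predAbove]
    have hi := i.isLt; have hj := j.isLt
    split_ifs <;> omega
  rcases h with h | h
  · rw [← h]; ring
  · rw [h]; ring

lemma K3a {k : ℕ} (i : Fin (k+2)) (j : Fin (k+1)) :
    (i.succAbove j).succAbove (j.predAbove i) = i := by
  apply Fin.ext
  simp only [val_succAbove, val_predAbove]
  have hi := i.isLt; have hj := j.isLt
  split_ifs <;> omega

lemma K3b {k : ℕ} (i : Fin (k+2)) (j : Fin (k+1)) :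
    (j.predAbove i).predAbove (i.succAbove j) = j := by
  apply Fin.ext
  simp only [val_succAbove, val_predAbove]
  have hi := i.isLt; have hj := j.isLt
  split_ifs <;> omega


set_option linter.unusedSectionVars false

open Fin

variable {N : Type*} [AddCommGroup N] [Module ℝ N] {E : Type*} [AddCommGroup E] [Module ℝ E]

lemma tuple_cycle {k : ℕ} (w : Fin (k+1) → E) (i : Fin (k+1)) :
    w ∘ (i.cycleRange).symm = Fin.cons (w i) (w ∘ i.succAbove) := by
  funext t
  induction t using Fin.cases with
  | zero => simp [Fin.cycleRange_symm_zero]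
  | succ s => simp [Fin.cycleRange_symm_succ]

lemma map_cons_succAbove {k : ℕ} (Ω : E [⋀^Fin (k+1)]→ₗ[ℝ] N) (w : Fin (k+1) → E)
    (i : Fin (k+1)) :
    Ω (Fin.cons (w i) (w ∘ i.succAbove)) = ((-1 : ℝ) ^ (i : ℕ)) • Ω w := by
  rw [← tuple_cycle, Ω.map_perm w (i.cycleRange).symm, Equiv.Perm.sign_symm,
    Fin.sign_cycleRange, Units.smul_def]
  have h : ((((-1 : ℤˣ) ^ (i : ℕ) : ℤˣ) : ℤ) : ℝ) = (-1 : ℝ) ^ (i : ℕ) := by push_cast; ring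
  rw [← Int.cast_smul_eq_zsmul ℝ, h]

lemma map_cons_succAbove' {k : ℕ} (Ω : E [⋀^Fin (k+1)]→ₗ[ℝ] N) (w : Fin (k+1) → E)
    (i : Fin (k+1)) :
    Ω w = ((-1 : ℝ) ^ (i : ℕ)) • Ω (Fin.cons (w i) (w ∘ i.succAbove)) := by
  rw [map_cons_succAbove, smul_smul, ← pow_add, ← two_mul, pow_mul, neg_one_sq, one_pow, one_smul]

lemma map_cons_eq_sum {n k : ℕ} (Ω : (Fin n → ℝ) [⋀^Fin (k+1)]→ₗ[ℝ] N)
    (u : Fin n → ℝ) (w : Fin k → (Fin n → ℝ)) :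
    Ω (Fin.cons u w) = ∑ a : Fin n, u a • Ω (Fin.cons (Pi.single a 1) w) := by
  have h1 : u = ∑ a : Fin n, u a • (Pi.single a 1 : Fin n → ℝ) := by
    funext t; simp [Pi.single_apply, Finset.sum_ite_eq', mul_comm]
  have h2 : Ω (Fin.cons u w) = Ω.curryLeft u w := rfl
  rw [h2]
  conv_lhs => rw [h1]
  rw [map_sum]
  have h3 : ∀ g : Fin n → ((Fin n → ℝ) [⋀^Fin k]→ₗ[ℝ] N),
      (∑ a : Fin n, g a) w = ∑ a : Fin n, g a w := by
    intro g
    induction (Finset.univ : Finset (Fin n)) using Finset.induction_on with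
    | empty => simp
    | @insert a s h ih => simp [Finset.sum_insert h, AlternatingMap.add_apply, ih]
  rw [h3]
  congr 1
  funext a
  rw [map_smul, AlternatingMap.smul_apply]
  rfl

lemma cons_cons_swap {k : ℕ} (y z : E) (v : Fin k → E) :
    Fin.cons y (Fin.cons z v) ∘ Equiv.swap 0 1 = Fin.cons z (Fin.cons y v) := by
  funext t
  induction t using Fin.cases with
  | zero =>
    simp only [Function.comp_apply, Equiv.swap_apply_left, Fin.cons_zero]
    rw [← Fin.succ_zero_eq_one, Fin.cons_succ, Fin.cons_zero]
  | succ s =>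
    induction s using Fin.cases with
    | zero =>
      simp only [Function.comp_apply, Fin.succ_zero_eq_one, Equiv.swap_apply_right,
        Fin.cons_zero, Fin.cons_succ]
      rw [← Fin.succ_zero_eq_one, Fin.cons_succ, Fin.cons_zero]
    | succ u =>
      have h0 : (u.succ.succ : Fin (k+2)) ≠ 0 := Fin.succ_ne_zero _
      have h1 : (u.succ.succ : Fin (k+2)) ≠ 1 := by
        rw [← Fin.succ_zero_eq_one]
        simp only [ne_eq, Fin.succ_inj]
        exact Fin.succ_ne_zero _
      simp only [Function.comp_apply, Equiv.swap_apply_of_ne_of_ne h0 h1, Fin.cons_succ]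

lemma map_cons_cons_symm {k : ℕ} (Ω : E [⋀^Fin (k+2)]→ₗ[ℝ] N) (y z : E) (v : Fin k → E) :
    Ω (Fin.cons y (Fin.cons z v)) = - Ω (Fin.cons z (Fin.cons y v)) := by
  have h01 : (0 : Fin (k+2)) ≠ 1 := by
    rw [← Fin.succ_zero_eq_one]
    exact (Fin.succ_ne_zero 0).symm
  rw [← cons_cons_swap y z v, Ω.map_swap _ h01, neg_neg]

lemma cons_comp_succAbove_succ {k : ℕ} (z : E) (v : Fin (k+1) → E) (i : Fin (k+1)) :
    Fin.cons z v ∘ (Fin.succ i).succAbove = Fin.cons z (v ∘ i.succAbove) := by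
  funext t
  induction t using Fin.cases with
  | zero => simp
  | succ s => simp [Fin.succ_succAbove_succ]

lemma update_comp_succAbove {k : ℕ} (v : Fin (k+1) → E) (i : Fin (k+1)) (u : E) :
    Function.update v i u ∘ i.succAbove = v ∘ i.succAbove := by
  funext t; simp [Function.update_apply, Fin.succAbove_ne i t]

lemma update_comp_succAbove_ne {k : ℕ} (v : Fin (k+1) → E) {i j : Fin (k+1)} (h : j ≠ i)
    (u : E) : ∃ s : Fin k, i.succAbove s = j ∧
      Function.update v j u ∘ i.succAbove = Function.update (v ∘ i.succAbove) s u := by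
  obtain ⟨s, hs⟩ := Fin.exists_succAbove_eq h
  exact ⟨s, hs, by rw [← hs, Function.update_comp_eq_of_injective _ (Fin.succAbove_right_injective)]⟩


open MvPolynomial

variable {n : ℕ}

lemma degree_univ_sum (d : Fin n →₀ ℕ) : d.degree = ∑ a : Fin n, d a := by
  rw [Finsupp.degree]
  exact Finset.sum_subset (Finset.subset_univ _) (fun x _ hx => by
    simpa using Finsupp.notMem_support_iff.mp hx)

lemma homog_degree_sum {p : MvPolynomial (Fin n) ℝ} {r : ℕ} (hp : p.IsHomogeneous r)
    {d : Fin n →₀ ℕ} (hd : d ∈ p.support) : ∑ a : Fin n, d a = r := by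
  rw [← degree_univ_sum, Finsupp.degree_eq_weight_one]
  exact hp (mem_support_iff.mp hd)

lemma X_mul_pderiv_monomial (d : Fin n →₀ ℕ) (c : ℝ) (a : Fin n) :
    X a * pderiv a (monomial d c) = (d a) • monomial d c := by
  rw [pderiv_monomial]
  rcases Nat.eq_zero_or_pos (d a) with h | h
  · simp [h]
  · have he : Finsupp.single a 1 + (d - Finsupp.single a 1) = d := by
      ext b
      simp only [Finsupp.add_apply, Finsupp.tsub_apply, Finsupp.single_apply]
      split_ifs with hb
      · subst hb; omega
      · omega
    rw [X, monomial_mul, he, one_mul, smul_monomial]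
    congr 1
    rw [nsmul_eq_mul, mul_comm]

/-- Euler's identity. -/
lemma euler {p : MvPolynomial (Fin n) ℝ} {r : ℕ} (hp : p.IsHomogeneous r) :
    ∑ a : Fin n, X a * pderiv a p = (r : ℝ) • p := by
  have hrep : ∀ a : Fin n, X a * pderiv a p
      = ∑ d ∈ p.support, X a * pderiv a (monomial d (coeff d p)) := by
    intro a
    conv_lhs => rw [p.as_sum]
    rw [map_sum, Finset.mul_sum]
  conv_rhs => rw [p.as_sum]
  rw [Finset.smul_sum]
  calc ∑ a : Fin n, X a * pderiv a p
      = ∑ a : Fin n, ∑ d ∈ p.support, X a * pderiv a (monomial d (coeff d p)) :=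
        Finset.sum_congr rfl fun a _ => hrep a
    _ = ∑ d ∈ p.support, ∑ a : Fin n, X a * pderiv a (monomial d (coeff d p)) :=
        Finset.sum_comm
    _ = ∑ d ∈ p.support, (r : ℝ) • monomial d (coeff d p) := by
        refine Finset.sum_congr rfl fun d hd => ?_
        calc ∑ a : Fin n, X a * pderiv a (monomial d (coeff d p))
            = ∑ a : Fin n, (d a) • monomial d (coeff d p) :=
              Finset.sum_congr rfl fun a _ => X_mul_pderiv_monomial d _ a
          _ = (∑ a : Fin n, d a) • monomial d (coeff d p) := by rw [← Finset.sum_smul]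
          _ = (r : ℝ) • monomial d (coeff d p) := by
              rw [homog_degree_sum hp hd, ← Nat.cast_smul_eq_nsmul ℝ]

lemma pderiv_homog {p : MvPolynomial (Fin n) ℝ} {r : ℕ} (hp : p.IsHomogeneous r) (a : Fin n) :
    (pderiv a p).IsHomogeneous (r - 1) := by
  have hrep : pderiv a p = ∑ d ∈ p.support, pderiv a (monomial d (coeff d p)) := by
    conv_lhs => rw [p.as_sum]
    rw [map_sum]
  rw [hrep, ← mem_homogeneousSubmodule]
  refine Submodule.sum_mem _ fun d hd => ?_
  rw [pderiv_monomial, mem_homogeneousSubmodule]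
  rcases Nat.eq_zero_or_pos (d a) with h | h
  · simp only [h, Nat.cast_zero, mul_zero]
    rw [monomial_zero]
    exact isHomogeneous_zero _ _ _
  · apply isHomogeneous_monomial
    rw [degree_univ_sum]
    have h2 := homog_degree_sum hp hd
    have h3 : ∀ b : Fin n, (d - Finsupp.single a 1 : Fin n →₀ ℕ) b
        = if a = b then d a - 1 else d b := by
      intro b
      rw [Finsupp.tsub_apply, Finsupp.single_apply]
      split_ifs with hb
      · subst hb; rfl
      · omega
    rw [Finset.sum_congr rfl fun b _ => h3 b]
    rw [← Finset.add_sum_erase _ _ (Finset.mem_univ a), if_pos rfl]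
    rw [← Finset.add_sum_erase _ _ (Finset.mem_univ a)] at h2
    have h4 : ∑ b ∈ Finset.univ.erase a, (if a = b then d a - 1 else d b)
        = ∑ b ∈ Finset.univ.erase a, d b :=
      Finset.sum_congr rfl fun b hb => if_neg (Ne.symm (Finset.ne_of_mem_erase hb))
    rw [h4]
    omega

lemma pderiv_homog_zero {p : MvPolynomial (Fin n) ℝ} (hp : p.IsHomogeneous 0) (a : Fin n) :
    pderiv a p = 0 := by
  have hrep : pderiv a p = ∑ d ∈ p.support, pderiv a (monomial d (coeff d p)) := by
    conv_lhs => rw [p.as_sum]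
    rw [map_sum]
  rw [hrep]
  refine Finset.sum_eq_zero fun d hd => ?_
  have h2 := homog_degree_sum hp hd
  have h5 : d a ≤ ∑ b : Fin n, d b :=
    Finset.single_le_sum (f := fun b => d b) (fun _ _ => Nat.zero_le _) (Finset.mem_univ a)
  have : d a = 0 := by omega
  rw [pderiv_monomial, this]
  simp

lemma pderiv_comm (a b : Fin n) (p : MvPolynomial (Fin n) ℝ) :
    pderiv a (pderiv b p) = pderiv b (pderiv a p) := by
  induction p using MvPolynomial.induction_on with
  | C c => simp
  | add p q hp hq => simp [map_add, hp, hq]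
  | mul_X p i hp =>
    have hsa : ∀ (c e : Fin n), pderiv c ((Pi.single e 1 : Fin n → MvPolynomial (Fin n) ℝ) i) = 0 := by
      intro c e
      rcases eq_or_ne i e with rfl | he
      · rw [Pi.single_eq_same]; exact pderiv_one
      · rw [Pi.single_eq_of_ne he]; exact map_zero _
    simp only [pderiv_mul, map_add, hp, pderiv_X, hsa]
    ring


open MvPolynomial

variable {n : ℕ}

noncomputable def polyD (p : MvPolynomial (Fin n) ℝ) (x : Fin n → ℝ) : (Fin n → ℝ) →L[ℝ] ℝ :=
  ∑ a : Fin n, eval x (pderiv a p) • (ContinuousLinearMap.proj a : (Fin n → ℝ) →L[ℝ] ℝ)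

lemma polyD_apply (p : MvPolynomial (Fin n) ℝ) (x u : Fin n → ℝ) :
    polyD p x u = ∑ a : Fin n, u a * eval x (pderiv a p) := by
  simp [polyD, ContinuousLinearMap.sum_apply, mul_comm]

lemma hasFDerivAt_eval (p : MvPolynomial (Fin n) ℝ) (x : Fin n → ℝ) :
    HasFDerivAt (fun y => eval y p) (polyD p x) x := by
  induction p using MvPolynomial.induction_on with
  | C c =>
    have h : polyD (C c : MvPolynomial (Fin n) ℝ) x = 0 := by
      simp [polyD]
    rw [h]
    simpa using hasFDerivAt_const c x
  | add p q hp hq =>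
    have h : polyD (p + q) x = polyD p x + polyD q x := by
      simp [polyD, Finset.sum_add_distrib, add_smul]
    rw [h]
    have hadd := hp.add hq
    simp only [map_add]
    exact hadd
  | mul_X p i hp =>
    have hXi : HasFDerivAt (fun y : Fin n → ℝ => y i)
        (ContinuousLinearMap.proj i : (Fin n → ℝ) →L[ℝ] ℝ) x :=
      hasFDerivAt_apply i x
    have h := hp.mul hXi
    have hsingle : ∀ a, eval x ((Pi.single a 1 : Fin n → MvPolynomial (Fin n) ℝ) i)
        = if a = i then 1 else 0 := by
      intro a
      rcases eq_or_ne a i with rfl | hne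
      · simp
      · simp [Pi.single_eq_of_ne hne, hne]
    have heq : polyD (p * X i) x
        = eval x p • (ContinuousLinearMap.proj i : (Fin n → ℝ) →L[ℝ] ℝ) + x i • polyD p x := by
      apply ContinuousLinearMap.ext
      intro u
      simp only [ContinuousLinearMap.add_apply, ContinuousLinearMap.smul_apply,
        ContinuousLinearMap.proj_apply, polyD_apply, smul_eq_mul]
      simp only [pderiv_mul, pderiv_X, map_add, eval_mul, eval_X, hsingle]
      have hsplit : ∀ a : Fin n,
          u a * (eval x (pderiv a p) * x i + eval x p * (if a = i then 1 else 0))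
          = x i * (u a * eval x (pderiv a p)) + (if a = i then eval x p * u i else 0) := by
        intro a
        rcases eq_or_ne a i with rfl | hne
        · simp; ring
        · simp [hne]; ring
      rw [Finset.sum_congr rfl fun a _ => hsplit a, Finset.sum_add_distrib, ← Finset.mul_sum,
        Finset.sum_ite_eq' Finset.univ i]
      simp [Finset.mul_sum]
      ring
    rw [heq]
    have hfun : (fun y => eval y (p * X i)) = fun y => eval y p * y i := by
      funext y; simp
    rw [hfun]
    exact h

/-! ### Polynomial-coefficient alternating forms -/

abbrev PForm (n k : ℕ) := (Fin n → ℝ) [⋀^Fin k]→ₗ[ℝ] MvPolynomial (Fin n) ℝ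

namespace KoszulAux

open MvPolynomial

variable {n : ℕ}

lemma update_comp_succAbove_ne' {E : Type*} {k : ℕ} (v : Fin (k+1) → E) {i : Fin (k+1)}
    {s : Fin k} {j : Fin (k+1)} (hs : i.succAbove s = j) (u : E) :
    Function.update v j u ∘ i.succAbove = Function.update (v ∘ i.succAbove) s u := by
  rw [← hs, Function.update_comp_eq_of_injective _ Fin.succAbove_right_injective]

noncomputable def wedgeFn {k : ℕ} (φ : (Fin n → ℝ) →ₗ[ℝ] ℝ) (Ω : PForm n k)
    (v : Fin (k+1) → (Fin n → ℝ)) : MvPolynomial (Fin n) ℝ :=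
  ∑ i : Fin (k+1), ((-1:ℝ)^(i:ℕ) * φ (v i)) • Ω (v ∘ i.succAbove)

lemma wedgeFn_alt {k : ℕ} (φ : (Fin n → ℝ) →ₗ[ℝ] ℝ) (Ω : PForm n (k+1))
    (v : Fin (k+2) → (Fin n → ℝ)) {i0 i1 : Fin (k+2)} (heq : v i0 = v i1) (hne : i0 ≠ i1) :
    wedgeFn φ Ω v = 0 := by
  have hvanish : ∀ i ∈ Finset.univ, i ∉ ({i0, i1} : Finset (Fin (k+2))) →
      ((-1:ℝ)^(i:ℕ) * φ (v i)) • Ω (v ∘ i.succAbove) = 0 := by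
    intro i _ hi
    simp only [Finset.mem_insert, Finset.mem_singleton, not_or] at hi
    obtain ⟨t0, ht0⟩ := Fin.exists_succAbove_eq (Ne.symm hi.1)
    obtain ⟨t1, ht1⟩ := Fin.exists_succAbove_eq (Ne.symm hi.2)
    have htne : t0 ≠ t1 := fun h => hne (by rw [← ht0, ← ht1, h])
    have hz : Ω (v ∘ i.succAbove) = 0 := by
      apply Ω.map_eq_zero_of_eq _ _ htne
      show v (i.succAbove t0) = v (i.succAbove t1)
      rw [ht0, ht1, heq]
    rw [hz, smul_zero]
  have hsum : wedgeFn φ Ω v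
      = ∑ i ∈ ({i0, i1} : Finset (Fin (k+2))), ((-1:ℝ)^(i:ℕ) * φ (v i)) • Ω (v ∘ i.succAbove) :=
    (Finset.sum_subset (Finset.subset_univ _) hvanish).symm
  rw [hsum, Finset.sum_pair hne]
  obtain ⟨j1, hj1⟩ := Fin.exists_succAbove_eq (Ne.symm hne)
  set j0 := j1.predAbove i0 with hj0def
  have hK3a : i1.succAbove j0 = i0 := by rw [hj0def, ← hj1]; exact K3a i0 j1
  have hcomp : (v ∘ i0.succAbove) ∘ j1.succAbove = (v ∘ i1.succAbove) ∘ j0.succAbove := by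
    funext t
    show v (i0.succAbove (j1.succAbove t)) = v (i1.succAbove (j0.succAbove t))
    rw [K1 i0 j1 t, hj1]
  have e0 : Ω (v ∘ i0.succAbove)
      = ((-1:ℝ)^(j1:ℕ)) • Ω (Fin.cons (v i1) ((v ∘ i0.succAbove) ∘ j1.succAbove)) := by
    have h := map_cons_succAbove' Ω (v ∘ i0.succAbove) j1
    rwa [show (v ∘ i0.succAbove) j1 = v i1 from by
      show v (i0.succAbove j1) = v i1; rw [hj1]] at h
  have e1 : Ω (v ∘ i1.succAbove)
      = ((-1:ℝ)^(j0:ℕ)) • Ω (Fin.cons (v i1) ((v ∘ i0.succAbove) ∘ j1.succAbove)) := by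
    have h := map_cons_succAbove' Ω (v ∘ i1.succAbove) j0
    rwa [show (v ∘ i1.succAbove) j0 = v i1 from by
      show v (i1.succAbove j0) = v i1; rw [hK3a, heq], ← hcomp] at h
  rw [e0, e1, heq, smul_smul, smul_smul, ← add_smul]
  have hsign : ((-1:ℝ))^(i1:ℕ) * ((-1:ℝ))^(j0:ℕ) = -(((-1:ℝ))^(i0:ℕ) * ((-1:ℝ))^(j1:ℕ)) := by
    have h := K2pow i0 j1
    rw [hj1, ← hj0def] at h
    rw [pow_add] at h
    rw [h]
    rw [pow_add]
  have hc : (-1:ℝ)^(i0:ℕ) * φ (v i1) * (-1:ℝ)^(j1:ℕ)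
      + (-1:ℝ)^(i1:ℕ) * φ (v i1) * (-1:ℝ)^(j0:ℕ) = 0 := by
    linear_combination φ (v i1) * hsign
  rw [hc, zero_smul]

noncomputable def wedge1 {k : ℕ} (φ : (Fin n → ℝ) →ₗ[ℝ] ℝ) (Ω : PForm n k) :
    PForm n (k+1) where
  toFun := wedgeFn φ Ω
  map_update_add' := by
    intro inst v j u u'
    obtain rfl := Subsingleton.elim inst (instDecidableEqFin _)
    unfold wedgeFn
    rw [← Finset.sum_add_distrib]
    refine Finset.sum_congr rfl fun i _ => ?_
    rcases eq_or_ne i j with rfl | hij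
    · rw [update_comp_succAbove, update_comp_succAbove, update_comp_succAbove,
        Function.update_self, Function.update_self, Function.update_self,
        map_add, mul_add, add_smul]
    · obtain ⟨s, hs⟩ := Fin.exists_succAbove_eq (Ne.symm hij)
      rw [update_comp_succAbove_ne' v hs, update_comp_succAbove_ne' v hs,
        update_comp_succAbove_ne' v hs,
        Function.update_of_ne hij, Function.update_of_ne hij, Function.update_of_ne hij,
        Ω.map_update_add, smul_add]
  map_update_smul' := by
    intro inst v j c u
    obtain rfl := Subsingleton.elim inst (instDecidableEqFin _)
    unfold wedgeFn
    rw [Finset.smul_sum]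
    refine Finset.sum_congr rfl fun i _ => ?_
    rcases eq_or_ne i j with rfl | hij
    · rw [update_comp_succAbove, update_comp_succAbove, Function.update_self,
        Function.update_self, map_smul, smul_eq_mul, smul_smul]
      ring_nf
    · obtain ⟨s, hs⟩ := Fin.exists_succAbove_eq (Ne.symm hij)
      rw [update_comp_succAbove_ne' v hs, update_comp_succAbove_ne' v hs,
        Function.update_of_ne hij, Function.update_of_ne hij,
        Ω.map_update_smul, smul_comm]
  map_eq_zero_of_eq' := by
    intro v i j hv hij
    cases k with
    | zero => exact absurd (Fin.ext (by omega)) hij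
    | succ k => exact wedgeFn_alt φ Ω v hv hij

lemma wedge1_apply {k : ℕ} (φ : (Fin n → ℝ) →ₗ[ℝ] ℝ) (Ω : PForm n k)
    (v : Fin (k+1) → (Fin n → ℝ)) :
    wedge1 φ Ω v = ∑ i : Fin (k+1), ((-1:ℝ)^(i:ℕ) * φ (v i)) • Ω (v ∘ i.succAbove) := rfl

end KoszulAux

namespace KoszulAux

open MvPolynomial

variable {n : ℕ}

noncomputable def kappaP {k : ℕ} (Ω : PForm n (k+1)) : PForm n k :=
  ∑ a : Fin n, (X a : MvPolynomial (Fin n) ℝ) • (Ω.curryLeft (Pi.single a 1))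

lemma alt_sum_apply {k : ℕ} {α : Type*} (s : Finset α) (g : α → PForm n k)
    (w : Fin k → (Fin n → ℝ)) : (∑ a ∈ s, g a) w = ∑ a ∈ s, g a w := by
  induction s using Finset.cons_induction with
  | empty => simp
  | cons a s ha ih => rw [Finset.sum_cons, Finset.sum_cons, AlternatingMap.add_apply, ih]

lemma kappaP_apply {k : ℕ} (Ω : PForm n (k+1)) (v : Fin k → (Fin n → ℝ)) :
    kappaP Ω v = ∑ a : Fin n, X a * Ω (Fin.cons (Pi.single a 1) v) := by
  rw [kappaP, alt_sum_apply]
  refine Finset.sum_congr rfl fun a _ => ?_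
  rw [AlternatingMap.smul_apply, smul_eq_mul]
  rfl

lemma eval_kappaP {k : ℕ} (Ω : PForm n (k+1)) (x : Fin n → ℝ) (v : Fin k → (Fin n → ℝ)) :
    eval x (kappaP Ω v) = eval x (Ω (Fin.cons x v)) := by
  rw [kappaP_apply, map_sum, map_cons_eq_sum Ω x v, map_sum]
  refine Finset.sum_congr rfl fun a _ => ?_
  rw [eval_mul, eval_X, smul_eval]

lemma pderiv_rsmul (a : Fin n) (c : ℝ) (p : MvPolynomial (Fin n) ℝ) :
    pderiv a (c • p) = c • pderiv a p := by
  rw [smul_eq_C_mul, pderiv_mul, pderiv_C, zero_mul, zero_add, ← smul_eq_C_mul]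

noncomputable def pdA {k : ℕ} (a : Fin n) (Ω : PForm n k) : PForm n k :=
  (pderiv (R := ℝ) a).toLinearMap.compAlternatingMap Ω

lemma pdA_apply {k : ℕ} (a : Fin n) (Ω : PForm n k) (v : Fin k → (Fin n → ℝ)) :
    pdA a Ω v = pderiv a (Ω v) := rfl

noncomputable def dPoly {k : ℕ} (Ω : PForm n k) : PForm n (k+1) :=
  ∑ a : Fin n, wedge1 (LinearMap.proj a) (pdA a Ω)

lemma dPoly_apply {k : ℕ} (Ω : PForm n k) (v : Fin (k+1) → (Fin n → ℝ)) :
    dPoly Ω v = ∑ a : Fin n, ∑ i : Fin (k+1),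
      ((-1:ℝ)^(i:ℕ) * v i a) • pderiv a (Ω (v ∘ i.succAbove)) := by
  rw [dPoly, alt_sum_apply]
  exact Finset.sum_congr rfl fun a _ => wedge1_apply _ _ v

lemma dPoly_eq_zero {k : ℕ} {Ω : PForm n k} (h : ∀ w, Ω w = 0)
    (v : Fin (k+1) → (Fin n → ℝ)) : dPoly Ω v = 0 := by
  rw [dPoly_apply]
  refine Finset.sum_eq_zero fun a _ => Finset.sum_eq_zero fun i _ => ?_
  rw [h, map_zero, smul_zero]

lemma kappaP_eq_zero {k : ℕ} {Ω : PForm n (k+1)} (h : ∀ w, Ω w = 0)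
    (v : Fin k → (Fin n → ℝ)) : kappaP Ω v = 0 := by
  rw [kappaP_apply]
  exact Finset.sum_eq_zero fun a _ => by rw [h, mul_zero]

lemma dPoly_smul {k : ℕ} (c : ℝ) (Ω : PForm n k) (v : Fin (k+1) → (Fin n → ℝ)) :
    dPoly (c • Ω) v = c • dPoly Ω v := by
  rw [dPoly_apply, dPoly_apply, Finset.smul_sum]
  refine Finset.sum_congr rfl fun a _ => ?_
  rw [Finset.smul_sum]
  refine Finset.sum_congr rfl fun i _ => ?_
  rw [AlternatingMap.smul_apply, pderiv_rsmul, smul_comm]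

lemma kappaP_smul {k : ℕ} (c : ℝ) (Ω : PForm n (k+1)) (v : Fin k → (Fin n → ℝ)) :
    kappaP (c • Ω) v = c • kappaP Ω v := by
  rw [kappaP_apply, kappaP_apply, Finset.smul_sum]
  refine Finset.sum_congr rfl fun a _ => ?_
  rw [AlternatingMap.smul_apply, mul_smul_comm]

lemma dPoly_sub {k : ℕ} (Ω Ω' : PForm n k) (v : Fin (k+1) → (Fin n → ℝ)) :
    dPoly (Ω - Ω') v = dPoly Ω v - dPoly Ω' v := by
  rw [dPoly_apply, dPoly_apply, dPoly_apply, ← Finset.sum_sub_distrib]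
  refine Finset.sum_congr rfl fun a _ => ?_
  rw [← Finset.sum_sub_distrib]
  refine Finset.sum_congr rfl fun i _ => ?_
  rw [AlternatingMap.sub_apply, map_sub, smul_sub]

lemma kappaP_sub {k : ℕ} (Ω Ω' : PForm n (k+1)) (v : Fin k → (Fin n → ℝ)) :
    kappaP (Ω - Ω') v = kappaP Ω v - kappaP Ω' v := by
  rw [kappaP_apply, kappaP_apply, kappaP_apply, ← Finset.sum_sub_distrib]
  refine Finset.sum_congr rfl fun a _ => ?_
  rw [AlternatingMap.sub_apply, mul_sub]

/-- κ ∘ κ = 0 -/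
lemma kappaP_kappaP {k : ℕ} (Ω : PForm n (k+2)) (v : Fin k → (Fin n → ℝ)) :
    kappaP (kappaP Ω) v = 0 := by
  rw [kappaP_apply]
  have h : ∀ a : Fin n, X a * kappaP Ω (Fin.cons (Pi.single a 1) v)
      = ∑ b : Fin n, (X a * X b) *
        Ω (Fin.cons (Pi.single b 1) (Fin.cons (Pi.single a 1) v)) := by
    intro a
    rw [kappaP_apply, Finset.mul_sum]
    exact Finset.sum_congr rfl fun b _ => by ring
  rw [Finset.sum_congr rfl fun a _ => h a]
  set S := ∑ a : Fin n, ∑ b : Fin n, (X a * X b) *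
      Ω (Fin.cons (Pi.single b 1) (Fin.cons (Pi.single a 1) v)) with hS
  have h2 : S = -S := by
    conv_lhs => rw [hS, Finset.sum_comm]
    rw [hS, ← Finset.sum_neg_distrib]
    refine Finset.sum_congr rfl fun a _ => ?_
    rw [← Finset.sum_neg_distrib]
    refine Finset.sum_congr rfl fun b _ => ?_
    rw [map_cons_cons_symm Ω]
    ring
  have h4 : (2:ℝ) • S = 0 := by
    rw [two_smul]
    nth_rewrite 2 [h2]
    rw [add_neg_cancel]
  have h5 : S = (2:ℝ)⁻¹ • ((2:ℝ) • S) := by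
    rw [smul_smul]
    norm_num
  rw [h5, h4, smul_zero]

/-- d ∘ d = 0 -/
lemma dPoly_dPoly {k : ℕ} (Ω : PForm n k) (v : Fin (k+2) → (Fin n → ℝ)) :
    dPoly (dPoly Ω) v = 0 := by
  have hpd : ∀ (a : Fin n) (i : Fin (k+2)), pderiv a ((dPoly Ω) (v ∘ i.succAbove))
      = ∑ b : Fin n, ∑ j : Fin (k+1), ((-1:ℝ)^(j:ℕ) * v (i.succAbove j) b) •
          pderiv a (pderiv b (Ω ((v ∘ i.succAbove) ∘ j.succAbove))) := by
    intro a i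
    rw [dPoly_apply]
    rw [map_sum]
    refine Finset.sum_congr rfl fun b _ => ?_
    rw [map_sum]
    refine Finset.sum_congr rfl fun j _ => ?_
    rw [pderiv_rsmul]
    rfl
  have key : dPoly (dPoly Ω) v = ∑ p ∈ (Finset.univ ×ˢ Finset.univ :
      Finset (Fin (k+2) × Fin (k+1))), ∑ a : Fin n, ∑ b : Fin n,
      ((-1:ℝ)^((p.1:ℕ)+(p.2:ℕ)) * (v p.1 a * v (p.1.succAbove p.2) b)) •
        pderiv a (pderiv b (Ω ((v ∘ p.1.succAbove) ∘ p.2.succAbove))) := by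
    rw [dPoly_apply, Finset.sum_comm, Finset.sum_product]
    refine Finset.sum_congr rfl fun i _ => ?_
    calc ∑ a : Fin n, ((-1:ℝ)^(i:ℕ) * v i a) • pderiv a ((dPoly Ω) (v ∘ i.succAbove))
        = ∑ a : Fin n, ∑ b : Fin n, ∑ j : Fin (k+1),
            ((-1:ℝ)^((i:ℕ)+(j:ℕ)) * (v i a * v (i.succAbove j) b)) •
              pderiv a (pderiv b (Ω ((v ∘ i.succAbove) ∘ j.succAbove))) := by
          refine Finset.sum_congr rfl fun a _ => ?_
          rw [hpd a i, Finset.smul_sum]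
          refine Finset.sum_congr rfl fun b _ => ?_
          rw [Finset.smul_sum]
          refine Finset.sum_congr rfl fun j _ => ?_
          rw [smul_smul]
          congr 1
          rw [pow_add]
          ring
      _ = ∑ a : Fin n, ∑ j : Fin (k+1), ∑ b : Fin n,
            ((-1:ℝ)^((i:ℕ)+(j:ℕ)) * (v i a * v (i.succAbove j) b)) •
              pderiv a (pderiv b (Ω ((v ∘ i.succAbove) ∘ j.succAbove))) :=
          Finset.sum_congr rfl fun a _ => Finset.sum_comm
      _ = ∑ j : Fin (k+1), ∑ a : Fin n, ∑ b : Fin n,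
            ((-1:ℝ)^((i:ℕ)+(j:ℕ)) * (v i a * v (i.succAbove j) b)) •
              pderiv a (pderiv b (Ω ((v ∘ i.succAbove) ∘ j.succAbove))) :=
          Finset.sum_comm
  rw [key]
  apply Finset.sum_involution
    (g := fun p _ => ((p.1.succAbove p.2, p.2.predAbove p.1) : Fin (k+2) × Fin (k+1)))
  · -- sum of paired terms is zero
    intro p _
    obtain ⟨i, j⟩ := p
    have hcomp : (v ∘ (i.succAbove j).succAbove) ∘ (j.predAbove i).succAbove
        = (v ∘ i.succAbove) ∘ j.succAbove := by
      funext t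
      show v ((i.succAbove j).succAbove ((j.predAbove i).succAbove t))
        = v (i.succAbove (j.succAbove t))
      rw [K1 i j t]
    show (∑ a : Fin n, ∑ b : Fin n, _) + (∑ a : Fin n, ∑ b : Fin n, _) = 0
    rw [add_eq_zero_iff_eq_neg]
    rw [Finset.sum_comm, ← Finset.sum_neg_distrib]
    refine Finset.sum_congr rfl fun a _ => ?_
    rw [← Finset.sum_neg_distrib]
    refine Finset.sum_congr rfl fun b _ => ?_
    rw [hcomp, K3a i j, K2pow i j, pderiv_comm b a, ← neg_smul]
    congr 1
    ring
  · intro p _ _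
    obtain ⟨i, j⟩ := p
    intro hcontra
    exact Fin.succAbove_ne i j (congrArg Prod.fst hcontra)
  · intro p _
    exact Finset.mem_product.mpr ⟨Finset.mem_univ _, Finset.mem_univ _⟩
  · intro p _
    obtain ⟨i, j⟩ := p
    exact Prod.ext (K3a i j) (K3b i j)

end KoszulAux

namespace KoszulAux

open MvPolynomial

variable {n : ℕ}

lemma single_apply_ite (b a : Fin n) :
    ((Pi.single b (1:ℝ) : Fin n → ℝ) a) = if a = b then (1:ℝ) else 0 := by
  rcases eq_or_ne a b with rfl | h
  · simp
  · simp [Pi.single_eq_of_ne h, h]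

lemma cons_comp_succAbove_zero {E : Type*} {k : ℕ} (z : E) (v : Fin (k+1) → E) :
    (Fin.cons z v : Fin (k+2) → E) ∘ (0 : Fin (k+2)).succAbove = v := by
  funext t
  show (Fin.cons z v : Fin (k+2) → E) ((0 : Fin (k+2)).succAbove t) = v t
  rw [Fin.zero_succAbove, Fin.cons_succ]

/-- The Cartan magic formula `d κ + κ d = (r + k + 1) id` on homogeneous forms. -/
lemma magic {k r : ℕ} (Ω : PForm n (k+1))
    (hΩ : ∀ w, (Ω w).IsHomogeneous r) (v : Fin (k+1) → (Fin n → ℝ)) :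
    dPoly (kappaP Ω) v + kappaP (dPoly Ω) v = ((r + (k+1) : ℕ) : ℝ) • Ω v := by
  classical
  set B : MvPolynomial (Fin n) ℝ := ∑ i : Fin (k+1), ∑ a : Fin n, ∑ b : Fin n,
    ((-1:ℝ)^(i:ℕ) * v i a) •
      (X b * pderiv a (Ω (Fin.cons (Pi.single b 1) (v ∘ i.succAbove)))) with hB
  have hfirst : ∀ i : Fin (k+1),
      (∑ a : Fin n, ((-1:ℝ)^(i:ℕ) * v i a) • Ω (Fin.cons (Pi.single a 1) (v ∘ i.succAbove)))
      = Ω v := by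
    intro i
    have h1 : ∑ a : Fin n, ((-1:ℝ)^(i:ℕ) * v i a) •
        Ω (Fin.cons (Pi.single a 1) (v ∘ i.succAbove))
        = ((-1:ℝ)^(i:ℕ)) • ∑ a : Fin n, (v i a) •
          Ω (Fin.cons (Pi.single a 1) (v ∘ i.succAbove)) := by
      rw [Finset.smul_sum]
      exact Finset.sum_congr rfl fun a _ => by rw [smul_smul]
    rw [h1, ← map_cons_eq_sum, map_cons_succAbove Ω v i, smul_smul, ← pow_add, ← two_mul,
      pow_mul, neg_one_sq, one_pow, one_smul]
  have hterm : ∀ i : Fin (k+1), ∀ a : Fin n,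
      pderiv a (kappaP Ω (v ∘ i.succAbove))
      = Ω (Fin.cons (Pi.single a 1) (v ∘ i.succAbove))
        + ∑ b : Fin n, X b * pderiv a (Ω (Fin.cons (Pi.single b 1) (v ∘ i.succAbove))) := by
    intro i a
    rw [kappaP_apply, map_sum]
    have h1 : ∀ b : Fin n, pderiv a (X b * Ω (Fin.cons (Pi.single b 1) (v ∘ i.succAbove)))
        = (if b = a then Ω (Fin.cons (Pi.single b 1) (v ∘ i.succAbove)) else 0)
          + X b * pderiv a (Ω (Fin.cons (Pi.single b 1) (v ∘ i.succAbove))) := by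
      intro b
      rw [pderiv_mul]
      congr 1
      rcases eq_or_ne b a with rfl | h
      · rw [if_pos rfl, pderiv_X_self, one_mul]
      · rw [if_neg h, pderiv_X_of_ne h, zero_mul]
    rw [Finset.sum_congr rfl fun b _ => h1 b, Finset.sum_add_distrib,
      Finset.sum_ite_eq' Finset.univ a]
    simp only [Finset.mem_univ, if_true]
  have E1 : dPoly (kappaP Ω) v = ((k+1:ℕ) : ℝ) • Ω v + B := by
    rw [dPoly_apply, Finset.sum_comm]
    calc ∑ i : Fin (k+1), ∑ a : Fin n,
          ((-1:ℝ)^(i:ℕ) * v i a) • pderiv a (kappaP Ω (v ∘ i.succAbove))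
        = ∑ i : Fin (k+1), (Ω v + ∑ a : Fin n, ∑ b : Fin n, ((-1:ℝ)^(i:ℕ) * v i a) •
            (X b * pderiv a (Ω (Fin.cons (Pi.single b 1) (v ∘ i.succAbove))))) := by
          refine Finset.sum_congr rfl fun i _ => ?_
          rw [Finset.sum_congr rfl fun a (_ : a ∈ Finset.univ) => by
            rw [hterm i a, smul_add, Finset.smul_sum]]
          rw [Finset.sum_add_distrib, hfirst i]
      _ = ((k+1:ℕ) : ℝ) • Ω v + B := by
          rw [Finset.sum_add_distrib, Finset.sum_const, Finset.card_univ, Fintype.card_fin,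
            ← Nat.cast_smul_eq_nsmul ℝ]
  have hper : ∀ b : Fin n, (dPoly Ω) (Fin.cons (Pi.single b 1) v)
      = pderiv b (Ω v) + ∑ a : Fin n, ∑ i : Fin (k+1),
          (-((-1:ℝ)^(i:ℕ) * v i a)) •
            pderiv a (Ω (Fin.cons (Pi.single b 1) (v ∘ i.succAbove))) := by
    intro b
    rw [dPoly_apply]
    have hsplit : ∀ a : Fin n, (∑ j : Fin (k+2),
        ((-1:ℝ)^(j:ℕ) * (Fin.cons (Pi.single b 1) v : Fin (k+2) → Fin n → ℝ) j a) •
          pderiv a (Ω ((Fin.cons (Pi.single b 1) v : Fin (k+2) → Fin n → ℝ) ∘ j.succAbove)))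
        = (if a = b then pderiv a (Ω v) else 0)
          + ∑ i : Fin (k+1), (-((-1:ℝ)^(i:ℕ) * v i a)) •
            pderiv a (Ω (Fin.cons (Pi.single b 1) (v ∘ i.succAbove))) := by
      intro a
      rw [Fin.sum_univ_succ]
      congr 1
      · rw [cons_comp_succAbove_zero, Fin.cons_zero, Fin.val_zero, pow_zero, one_mul,
          single_apply_ite, ite_smul, one_smul, zero_smul]
      · refine Finset.sum_congr rfl fun i _ => ?_
        rw [cons_comp_succAbove_succ, Fin.cons_succ, Fin.val_succ, pow_succ]
        congr 1
        ring
    rw [Finset.sum_congr rfl fun a _ => hsplit a, Finset.sum_add_distrib,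
      Finset.sum_ite_eq' Finset.univ b]
    simp only [Finset.mem_univ, if_true]
  have E2 : kappaP (dPoly Ω) v = (r:ℝ) • Ω v - B := by
    rw [kappaP_apply]
    calc ∑ b : Fin n, X b * (dPoly Ω) (Fin.cons (Pi.single b 1) v)
        = ∑ b : Fin n, (X b * pderiv b (Ω v)
            + ∑ a : Fin n, ∑ i : Fin (k+1), -(((-1:ℝ)^(i:ℕ) * v i a) •
              (X b * pderiv a (Ω (Fin.cons (Pi.single b 1) (v ∘ i.succAbove)))))) := by
          refine Finset.sum_congr rfl fun b _ => ?_
          rw [hper b, mul_add]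
          congr 1
          rw [Finset.mul_sum]
          refine Finset.sum_congr rfl fun a _ => ?_
          rw [Finset.mul_sum]
          refine Finset.sum_congr rfl fun i _ => ?_
          rw [mul_smul_comm, neg_smul]
      _ = (∑ b : Fin n, X b * pderiv b (Ω v))
          + ∑ b : Fin n, ∑ a : Fin n, ∑ i : Fin (k+1), -(((-1:ℝ)^(i:ℕ) * v i a) •
              (X b * pderiv a (Ω (Fin.cons (Pi.single b 1) (v ∘ i.succAbove))))) :=
          Finset.sum_add_distrib
      _ = (r:ℝ) • Ω v - B := by
          rw [euler (hΩ v), sub_eq_add_neg]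
          congr 1
          calc ∑ b : Fin n, ∑ a : Fin n, ∑ i : Fin (k+1), -(((-1:ℝ)^(i:ℕ) * v i a) •
                (X b * pderiv a (Ω (Fin.cons (Pi.single b 1) (v ∘ i.succAbove)))))
              = -∑ b : Fin n, ∑ a : Fin n, ∑ i : Fin (k+1), (((-1:ℝ)^(i:ℕ) * v i a) •
                (X b * pderiv a (Ω (Fin.cons (Pi.single b 1) (v ∘ i.succAbove))))) := by
                rw [← Finset.sum_neg_distrib]
                refine Finset.sum_congr rfl fun b _ => ?_
                rw [← Finset.sum_neg_distrib]
                refine Finset.sum_congr rfl fun a _ => ?_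
                rw [← Finset.sum_neg_distrib]
            _ = -B := by
                rw [hB, neg_inj]
                calc ∑ b : Fin n, ∑ a : Fin n, ∑ i : Fin (k+1), (((-1:ℝ)^(i:ℕ) * v i a) •
                      (X b * pderiv a (Ω (Fin.cons (Pi.single b 1) (v ∘ i.succAbove)))))
                    = ∑ a : Fin n, ∑ b : Fin n, ∑ i : Fin (k+1), (((-1:ℝ)^(i:ℕ) * v i a) •
                      (X b * pderiv a (Ω (Fin.cons (Pi.single b 1) (v ∘ i.succAbove))))) :=
                      Finset.sum_comm
                  _ = ∑ a : Fin n, ∑ i : Fin (k+1), ∑ b : Fin n, (((-1:ℝ)^(i:ℕ) * v i a) •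
                      (X b * pderiv a (Ω (Fin.cons (Pi.single b 1) (v ∘ i.succAbove))))) :=
                      Finset.sum_congr rfl fun a _ => Finset.sum_comm
                  _ = ∑ i : Fin (k+1), ∑ a : Fin n, ∑ b : Fin n, (((-1:ℝ)^(i:ℕ) * v i a) •
                      (X b * pderiv a (Ω (Fin.cons (Pi.single b 1) (v ∘ i.succAbove))))) :=
                      Finset.sum_comm
  rw [E1, E2]
  have hc : ((r + (k+1) : ℕ) : ℝ) = ((k+1:ℕ):ℝ) + (r:ℝ) := by push_cast; ring
  rw [hc, add_smul]
  abel

/-- magic in degree 0 : `κ d = r id`. -/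
lemma magic0 {r : ℕ} (Ω : PForm n 0)
    (hΩ : ∀ w, (Ω w).IsHomogeneous r) (v : Fin 0 → (Fin n → ℝ)) :
    kappaP (dPoly Ω) v = (r : ℝ) • Ω v := by
  classical
  have hall : ∀ w : Fin 0 → (Fin n → ℝ), w = v := by
    intro w; funext t; exact absurd t.isLt (by omega)
  rw [kappaP_apply]
  have hper : ∀ b : Fin n, (dPoly Ω) (Fin.cons (Pi.single b 1) v) = pderiv b (Ω v) := by
    intro b
    rw [dPoly_apply]
    have h1 : ∀ a : Fin n, (∑ i : Fin 1,
        ((-1:ℝ)^(i:ℕ) * (Fin.cons (Pi.single b 1) v : Fin 1 → Fin n → ℝ) i a) •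
          pderiv a (Ω ((Fin.cons (Pi.single b 1) v : Fin 1 → Fin n → ℝ) ∘ i.succAbove)))
        = (if a = b then pderiv a (Ω v) else 0) := by
      intro a
      rw [Fin.sum_univ_one]
      rw [show ((Fin.cons (Pi.single b 1) v : Fin 1 → Fin n → ℝ) ∘ (0:Fin 1).succAbove) = v from
        hall _]
      rw [Fin.cons_zero, Fin.val_zero, pow_zero, one_mul, single_apply_ite, ite_smul,
        one_smul, zero_smul]
    rw [Finset.sum_congr rfl fun a _ => h1 a, Finset.sum_ite_eq' Finset.univ b]
    simp only [Finset.mem_univ, if_true]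
  rw [Finset.sum_congr rfl fun b (_ : b ∈ Finset.univ) => by rw [hper b]]
  exact euler (hΩ v)

end KoszulAux

namespace KoszulAux

open MvPolynomial

variable {n : ℕ}

lemma kappaP_homog {k r : ℕ} {Ω : PForm n (k+1)} (hΩ : ∀ w, (Ω w).IsHomogeneous r)
    (v : Fin k → (Fin n → ℝ)) : ((kappaP Ω) v).IsHomogeneous (r+1) := by
  rw [kappaP_apply, ← mem_homogeneousSubmodule]
  refine Submodule.sum_mem _ fun a _ => ?_
  rw [mem_homogeneousSubmodule, Nat.add_comm r 1]
  exact (isHomogeneous_X ℝ a).mul (hΩ _)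

lemma dPoly_homog {k s : ℕ} {Ω : PForm n k} (hΩ : ∀ w, (Ω w).IsHomogeneous (s+1))
    (v : Fin (k+1) → (Fin n → ℝ)) : ((dPoly Ω) v).IsHomogeneous s := by
  rw [dPoly_apply, ← mem_homogeneousSubmodule]
  refine Submodule.sum_mem _ fun a _ => Submodule.sum_mem _ fun i _ => ?_
  refine Submodule.smul_mem _ _ ?_
  rw [mem_homogeneousSubmodule]
  have h := pderiv_homog (hΩ (v ∘ i.succAbove)) a
  simpa using h

lemma dPoly_homog_zero {k : ℕ} {Ω : PForm n k} (hΩ : ∀ w, (Ω w).IsHomogeneous 0)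
    (v : Fin (k+1) → (Fin n → ℝ)) : (dPoly Ω) v = 0 := by
  rw [dPoly_apply]
  refine Finset.sum_eq_zero fun a _ => Finset.sum_eq_zero fun i _ => ?_
  rw [pderiv_homog_zero (hΩ _) a, smul_zero]

/-! ### From polynomial forms to `DForm` -/

noncomputable def evalL (x : Fin n → ℝ) : MvPolynomial (Fin n) ℝ →ₗ[ℝ] ℝ where
  toFun p := eval x p
  map_add' p q := by show eval x (p + q) = eval x p + eval x q; rw [map_add]
  map_smul' c p := by show eval x (c • p) = c • eval x p; rw [smul_eval]; rfl

noncomputable def fromP {k : ℕ} (Θ : PForm n k) : DForm n k :=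
  fun x => (evalL x).compAlternatingMap Θ

lemma fval_fromP {k : ℕ} (Θ : PForm n k) :
    fval (fromP Θ) = fun x v => eval x (Θ v) := rfl

lemma fromP_smul_IsHomogZ {k : ℕ} (c : ℝ) (Θ : PForm n k) {r : ℕ}
    (hΘ : ∀ w, (Θ w).IsHomogeneous r) : IsHomogZ (r : ℤ) (fromP (c • Θ)) := by
  intro v
  refine ⟨c • Θ v, fun x => ?_, Or.inr ⟨r, rfl, ?_⟩⟩
  · rw [fval_fromP]
    show eval x ((c • Θ) v) = eval x (c • Θ v)
    rw [AlternatingMap.smul_apply]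
  · rw [← mem_homogeneousSubmodule]
    exact Submodule.smul_mem _ _ ((mem_homogeneousSubmodule _ _).mpr (hΘ v))

/-! ### From `DForm` to polynomial forms -/

lemma exists_toP {k : ℕ} {s : ℤ} (ω : DForm n k) (h : IsHomogZ s ω) :
    ∃ Θ : PForm n k, (∀ x v, fval ω x v = eval x (Θ v)) ∧
      (∀ v, Θ v = 0 ∨ ∃ m : ℕ, (m : ℤ) = s ∧ (Θ v).IsHomogeneous m) := by
  classical
  have hspec1 : ∀ v x, fval ω x v = eval x (Classical.choose (h v)) :=
    fun v => (Classical.choose_spec (h v)).1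
  have hspec2 : ∀ v, Classical.choose (h v) = 0 ∨
      ∃ m : ℕ, (m : ℤ) = s ∧ (Classical.choose (h v)).IsHomogeneous m :=
    fun v => (Classical.choose_spec (h v)).2
  refine ⟨{ toFun := fun v => Classical.choose (h v)
            map_update_add' := ?_
            map_update_smul' := ?_
            map_eq_zero_of_eq' := ?_ }, fun x v => hspec1 v x, hspec2⟩
  · intro inst v j u u'
    obtain rfl := Subsingleton.elim inst (instDecidableEqFin _)
    apply MvPolynomial.funext
    intro x
    rw [map_add, ← hspec1, ← hspec1, ← hspec1]
    exact (ω x).map_update_add v j u u'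
  · intro inst v j c u
    obtain rfl := Subsingleton.elim inst (instDecidableEqFin _)
    apply MvPolynomial.funext
    intro x
    rw [smul_eval, ← hspec1, ← hspec1]
    exact (ω x).map_update_smul v j c u
  · intro v i j hv hij
    apply MvPolynomial.funext
    intro x
    rw [map_zero, ← hspec1]
    exact (ω x).map_eq_zero_of_eq v hv hij

/-! ### Analytic bridges -/

lemma dOp_eval {k : ℕ} (Θ : PForm n k) (x : Fin n → ℝ) (v : Fin (k+1) → (Fin n → ℝ)) :
    dOp (fun y w => eval y (Θ w)) x v = eval x (dPoly Θ v) := by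
  show (∑ i : Fin (k+1), (-1 : ℝ) ^ (i : ℕ) *
      fderiv ℝ (fun y => eval y (Θ (v ∘ i.succAbove))) x (v i)) = _
  rw [dPoly_apply, map_sum,
    Finset.sum_congr rfl fun a (_ : a ∈ Finset.univ) => map_sum (eval x) _ Finset.univ,
    Finset.sum_comm]
  refine Finset.sum_congr rfl fun i _ => ?_
  rw [(hasFDerivAt_eval (Θ (v ∘ i.succAbove)) x).fderiv, polyD_apply, Finset.mul_sum]
  refine Finset.sum_congr rfl fun a _ => ?_
  rw [smul_eval]
  ring

lemma kOp_eval {k : ℕ} (Θ : PForm n (k+1)) (x : Fin n → ℝ) (v : Fin k → (Fin n → ℝ)) :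
    kOp (fun y w => eval y (Θ w)) x v = eval x (kappaP Θ v) := by
  rw [eval_kappaP]
  rfl

end KoszulAux

open KoszulAux MvPolynomial in
/-- For `r + k > 0`, `H_r Λ^k = d H_{r+1} Λ^{k−1} ⊕ κ H_{r−1} Λ^{k+1}`:
every homogeneous polynomial `k`-form of degree `r` decomposes as `dα + κβ`, and the
two summands are uniquely determined.  The case `k ≥ 1` is stated with `k = m + 1`;
for `k = 0` (with `r > 0`) the `d`-summand is absent and `H_r Λ⁰ = κ H_{r−1} Λ¹`. -/
theorem homogeneous_koszul_decomposition (n r : ℕ) :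
    (∀ (m : ℕ) (ω : DForm n (m + 1)), IsHomogZ (r : ℤ) ω →
      (∃ (α : DForm n m) (β : DForm n (m + 2)),
        IsHomogZ ((r : ℤ) + 1) α ∧ IsHomogZ ((r : ℤ) - 1) β ∧
        ∀ (x : Fin n → ℝ) (v : Fin (m + 1) → (Fin n → ℝ)),
          fval ω x v = dOp (fval α) x v + kOp (fval β) x v) ∧
      (∀ (α α' : DForm n m) (β β' : DForm n (m + 2)),
        IsHomogZ ((r : ℤ) + 1) α → IsHomogZ ((r : ℤ) + 1) α' →
        IsHomogZ ((r : ℤ) - 1) β → IsHomogZ ((r : ℤ) - 1) β' →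
        (∀ (x : Fin n → ℝ) (v : Fin (m + 1) → (Fin n → ℝ)),
          dOp (fval α) x v + kOp (fval β) x v
            = dOp (fval α') x v + kOp (fval β') x v) →
        (∀ (x : Fin n → ℝ) (v : Fin (m + 1) → (Fin n → ℝ)),
          dOp (fval α) x v = dOp (fval α') x v ∧
          kOp (fval β) x v = kOp (fval β') x v))) ∧
    (0 < r → ∀ ω : DForm n 0, IsHomogZ (r : ℤ) ω →
      ∃ β : DForm n 1, IsHomogZ ((r : ℤ) - 1) β ∧
        ∀ (x : Fin n → ℝ) (v : Fin 0 → (Fin n → ℝ)),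
          fval ω x v = kOp (fval β) x v) := by
  constructor
  · intro m ω hω
    constructor
    · -- existence
      obtain ⟨Ω, hΩ1, hΩ2⟩ := exists_toP ω hω
      have hΩh : ∀ w, (Ω w).IsHomogeneous r := by
        intro w
        rcases hΩ2 w with h | ⟨m', hm', h⟩
        · rw [h]; exact isHomogeneous_zero _ _ _
        · rwa [Nat.cast_inj.mp hm'] at h
      set c : ℝ := ((r + (m+1) : ℕ) : ℝ) with hcdef
      have hc : c ≠ 0 := Nat.cast_ne_zero.mpr (by omega)
      refine ⟨fromP (c⁻¹ • kappaP Ω), fromP (c⁻¹ • dPoly Ω), ?_, ?_, ?_⟩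
      · have h := fromP_smul_IsHomogZ c⁻¹ (kappaP Ω) (fun w => kappaP_homog hΩh w)
        have hde : ((r+1:ℕ):ℤ) = (r:ℤ)+1 := by push_cast; ring
        exact hde ▸ h
      · rcases Nat.eq_zero_or_pos r with hr0 | hrpos
        · subst hr0
          intro v
          refine ⟨0, fun x => ?_, Or.inl rfl⟩
          show eval x ((c⁻¹ • dPoly Ω) v) = eval x 0
          rw [AlternatingMap.smul_apply, dPoly_homog_zero hΩh, smul_zero]
        · obtain ⟨s, rfl⟩ : ∃ s, r = s + 1 := ⟨r - 1, by omega⟩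
          have h := fromP_smul_IsHomogZ c⁻¹ (dPoly Ω) (fun w => dPoly_homog hΩh w)
          have hde : ((s:ℕ):ℤ) = ((s+1:ℕ):ℤ) - 1 := by push_cast; ring
          exact hde ▸ h
      · intro x v
        rw [hΩ1 x v, fval_fromP, fval_fromP, dOp_eval, kOp_eval, dPoly_smul, kappaP_smul,
          smul_eval, smul_eval, ← mul_add, ← map_add, magic Ω hΩh v, smul_eval,
          ← mul_assoc, inv_mul_cancel₀ hc, one_mul]
    · -- uniqueness
      intro α α' β β' hα hα' hβ hβ' hsum
      obtain ⟨Pα, hPα1, hPα2⟩ := exists_toP α hα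
      obtain ⟨Pα', hPα'1, hPα'2⟩ := exists_toP α' hα'
      obtain ⟨Pβ, hPβ1, hPβ2⟩ := exists_toP β hβ
      obtain ⟨Pβ', hPβ'1, hPβ'2⟩ := exists_toP β' hβ'
      have hfα : fval α = fun x w => eval x (Pα w) := by funext x w; exact hPα1 x w
      have hfα' : fval α' = fun x w => eval x (Pα' w) := by funext x w; exact hPα'1 x w
      have hfβ : fval β = fun x w => eval x (Pβ w) := by funext x w; exact hPβ1 x w
      have hfβ' : fval β' = fun x w => eval x (Pβ' w) := by funext x w; exact hPβ'1 x w
      have hde : ((r+1:ℕ):ℤ) = (r:ℤ)+1 := by push_cast; ring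
      have hΓh : ∀ w, ((Pα - Pα') w).IsHomogeneous (r+1) := by
        intro w
        have h1 : (Pα w).IsHomogeneous (r+1) := by
          rcases hPα2 w with h | ⟨m', hm', h⟩
          · rw [h]; exact isHomogeneous_zero _ _ _
          · rwa [Nat.cast_inj.mp (hm'.trans hde.symm)] at h
        have h2 : (Pα' w).IsHomogeneous (r+1) := by
          rcases hPα'2 w with h | ⟨m', hm', h⟩
          · rw [h]; exact isHomogeneous_zero _ _ _
          · rwa [Nat.cast_inj.mp (hm'.trans hde.symm)] at h
        rw [AlternatingMap.sub_apply, ← mem_homogeneousSubmodule]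
        exact Submodule.sub_mem _ ((mem_homogeneousSubmodule _ _).mpr h1)
          ((mem_homogeneousSubmodule _ _).mpr h2)
      have hkey : ∀ v : Fin (m+1) → (Fin n → ℝ),
          dPoly (Pα - Pα') v = -(kappaP (Pβ - Pβ') v) := by
        intro v
        have h2 : ∀ x, eval x (dPoly Pα v + kappaP Pβ v)
            = eval x (dPoly Pα' v + kappaP Pβ' v) := by
          intro x
          rw [map_add, map_add]
          have h := hsum x v
          rwa [hfα, hfα', hfβ, hfβ', dOp_eval, dOp_eval, kOp_eval, kOp_eval] at h
        have h3 : dPoly Pα v + kappaP Pβ v = dPoly Pα' v + kappaP Pβ' v :=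
          MvPolynomial.funext h2
        rw [dPoly_sub, kappaP_sub, neg_sub, sub_eq_sub_iff_add_eq_add, h3, add_comm]
      have hκη : ∀ w : Fin m → (Fin n → ℝ), kappaP (dPoly (Pα - Pα')) w = 0 := by
        intro w
        rw [kappaP_apply]
        have hsummand : ∀ a : Fin n,
            X a * dPoly (Pα - Pα') (Fin.cons (Pi.single a 1) w)
            = -(X a * kappaP (Pβ - Pβ') (Fin.cons (Pi.single a 1) w)) := fun a => by
          rw [hkey]; ring
        rw [Finset.sum_congr rfl fun a _ => hsummand a, Finset.sum_neg_distrib,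
          ← kappaP_apply, kappaP_kappaP, neg_zero]
      have hdη : ∀ w : Fin (m+2) → (Fin n → ℝ), dPoly (dPoly (Pα - Pα')) w = 0 :=
        dPoly_dPoly _
      have hηhom : ∀ w, ((dPoly (Pα - Pα')) w).IsHomogeneous r := fun w => dPoly_homog hΓh w
      have hηzero : ∀ v : Fin (m+1) → (Fin n → ℝ), dPoly (Pα - Pα') v = 0 := by
        intro v
        have hm := magic (dPoly (Pα - Pα')) hηhom v
        rw [dPoly_eq_zero hκη, kappaP_eq_zero hdη, add_zero] at hm
        set c : ℝ := ((r + (m+1) : ℕ) : ℝ) with hcdef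
        have hc : c ≠ 0 := Nat.cast_ne_zero.mpr (by omega)
        have h5 : dPoly (Pα - Pα') v = c⁻¹ • (c • dPoly (Pα - Pα') v) := by
          rw [smul_smul, inv_mul_cancel₀ hc, one_smul]
        rw [h5, ← hm, smul_zero]
      intro x v
      constructor
      · rw [hfα, hfα', dOp_eval, dOp_eval]
        have h := hηzero v
        rw [dPoly_sub, sub_eq_zero] at h
        rw [h]
      · rw [hfβ, hfβ', kOp_eval, kOp_eval]
        have h2 : kappaP (Pβ - Pβ') v = 0 := by
          have h := hkey v
          rw [hηzero v] at h
          exact neg_eq_zero.mp h.symm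
        rw [kappaP_sub, sub_eq_zero] at h2
        rw [h2]
  · intro hr ω hω
    obtain ⟨Ω, hΩ1, hΩ2⟩ := exists_toP ω hω
    have hΩh : ∀ w, (Ω w).IsHomogeneous r := by
      intro w
      rcases hΩ2 w with h | ⟨m', hm', h⟩
      · rw [h]; exact isHomogeneous_zero _ _ _
      · rwa [Nat.cast_inj.mp hm'] at h
    obtain ⟨s, rfl⟩ : ∃ s, r = s + 1 := ⟨r - 1, by omega⟩
    have hc : ((s+1:ℕ):ℝ) ≠ 0 := Nat.cast_ne_zero.mpr (by omega)
    refine ⟨fromP ((((s+1:ℕ):ℝ))⁻¹ • dPoly Ω), ?_, ?_⟩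
    · have h := fromP_smul_IsHomogZ (((s+1:ℕ):ℝ))⁻¹ (dPoly Ω) (fun w => dPoly_homog hΩh w)
      have hde : ((s:ℕ):ℤ) = ((s+1:ℕ):ℤ) - 1 := by push_cast; ring
      exact hde ▸ h
    · intro x v
      rw [hΩ1 x v, fval_fromP, kOp_eval, kappaP_smul, smul_eval, magic0 Ω hΩh v, smul_eval,
        ← mul_assoc, inv_mul_cancel₀ hc, one_mul]
end
end

section
/- A smooth differential k-form ω on a convex open subset of ℝⁿ with dω = 0 and 1 ≤ k is exact: there exists a (k−1)-form η with dη = ω. -/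
set_option synthInstance.maxHeartbeats 1000000
set_option maxHeartbeats 1000000

open scoped BigOperators

noncomputable section

section Auxiliary

open MeasureTheory Metric Set intervalIntegral

lemma tube_lemma' {E : Type*} [NormedAddCommGroup E]
    {V : Set (E × ℝ)} (hV : IsOpen V) {x₀ : E}
    (hx : ∀ t ∈ Icc (0:ℝ) 1, (x₀, t) ∈ V) :
    ∃ ε > (0:ℝ), closedBall x₀ ε ×ˢ Icc (0:ℝ) 1 ⊆ V := by
  have hK : IsCompact (({x₀} : Set E) ×ˢ Icc (0:ℝ) 1) :=
    isCompact_singleton.prod isCompact_Icc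
  have hKV : ({x₀} : Set E) ×ˢ Icc (0:ℝ) 1 ⊆ V := by
    rintro ⟨x, t⟩ ⟨hx1, ht⟩
    rcases hx1 with rfl
    exact hx t ht
  obtain ⟨δ, δpos, hδ⟩ := hK.exists_thickening_subset_open hV hKV
  refine ⟨δ / 2, by linarith, ?_⟩
  rintro ⟨x, t⟩ ⟨hx1, ht⟩
  apply hδ
  rw [Metric.mem_thickening_iff]
  refine ⟨(x₀, t), ⟨rfl, ht⟩, ?_⟩
  have : dist ((x, t) : E × ℝ) (x₀, t) = dist x x₀ := by
    simp [Prod.dist_eq, dist_nonneg]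
  rw [this]
  calc dist x x₀ ≤ δ / 2 := mem_closedBall.1 hx1
    _ < δ := by linarith

/-- Differentiation under the integral sign for `x ↦ ∫ t in 0..1, F x t`. -/

lemma param_hasFDerivAt {E G : Type*} [NormedAddCommGroup E] [NormedSpace ℝ E] [ProperSpace E]
    [NormedAddCommGroup G] [NormedSpace ℝ G] [CompleteSpace G]
    {F : E → ℝ → G} {V : Set (E × ℝ)} (hV : IsOpen V)
    (hF : ContDiffOn ℝ 1 (Function.uncurry F) V)
    {x₀ : E} (hx : ∀ t ∈ Icc (0:ℝ) 1, (x₀, t) ∈ V) :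
    HasFDerivAt (fun x => ∫ t in (0:ℝ)..1, F x t)
      (∫ t in (0:ℝ)..1,
        (fderiv ℝ (Function.uncurry F) (x₀, t)).comp (ContinuousLinearMap.inl ℝ E ℝ)) x₀ := by
  obtain ⟨ε, εpos, hεV⟩ := tube_lemma' hV hx
  have hIoc : Set.uIoc (0:ℝ) 1 = Ioc (0:ℝ) 1 := uIoc_of_le zero_le_one
  have hW : ∀ x ∈ closedBall x₀ ε, ∀ t ∈ Icc (0:ℝ) 1, (x, t) ∈ V := fun x hxb t ht =>
    hεV ⟨hxb, ht⟩
  -- continuity of uncurry F and its fderiv on V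
  have hFc : ContinuousOn (Function.uncurry F) V := hF.continuousOn
  have hfd : ContinuousOn (fderiv ℝ (Function.uncurry F)) V :=
    hF.continuousOn_fderiv_of_isOpen hV le_rfl
  -- partial derivative facts
  have hpart : ∀ x t, (x, t) ∈ V → HasFDerivAt (fun y => F y t)
      ((fderiv ℝ (Function.uncurry F) (x, t)).comp (ContinuousLinearMap.inl ℝ E ℝ)) x := by
    intro x t hxt
    have h1 : HasFDerivAt (Function.uncurry F) (fderiv ℝ (Function.uncurry F) (x, t)) (x, t) :=
      ((hF.contDiffAt (hV.mem_nhds hxt)).differentiableAt one_ne_zero).hasFDerivAt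
    have h2 : HasFDerivAt (fun y : E => (y, t)) (ContinuousLinearMap.inl ℝ E ℝ) x :=
      hasFDerivAt_prodMk_left x t
    exact h1.comp x h2
  -- bound on the compact tube
  have hWc : IsCompact (closedBall x₀ ε ×ˢ Icc (0:ℝ) 1) :=
    (isCompact_closedBall x₀ ε).prod isCompact_Icc
  obtain ⟨C, hC⟩ := hWc.exists_bound_of_continuousOn
    (hfd.mono (fun p hp => hεV hp))
  -- apply the dominated derivative lemma
  have main := intervalIntegral.hasFDerivAt_integral_of_dominated_of_fderiv_le
    (F := F) (F' := fun x t => (fderiv ℝ (Function.uncurry F) (x, t)).comp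
      (ContinuousLinearMap.inl ℝ E ℝ))
    (μ := volume) (x₀ := x₀) (a := 0) (b := 1)
    (bound := fun _ => C * ‖ContinuousLinearMap.inl ℝ E ℝ‖) (Metric.ball_mem_nhds x₀ εpos)
    ?_ ?_ ?_ ?_ ?_ ?_
  · exact main
  · -- measurability in a nbhd
    filter_upwards [(isOpen_ball).mem_nhds (mem_ball_self εpos)] with x hxb
    have : ContinuousOn (fun t => F x t) (Icc (0:ℝ) 1) := by
      have : ContinuousOn (fun t : ℝ => ((x, t) : E × ℝ)) (Icc 0 1) :=
        (Continuous.prodMk_right x).continuousOn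
      exact hFc.comp this (fun t ht => hW x (ball_subset_closedBall hxb) t ht)
    rw [hIoc]
    exact (this.mono Ioc_subset_Icc_self).aestronglyMeasurable measurableSet_Ioc
  · -- integrability at x₀
    apply ContinuousOn.intervalIntegrable
    rw [uIcc_of_le zero_le_one]
    have hc : ContinuousOn (fun t : ℝ => ((x₀, t) : E × ℝ)) (Icc 0 1) :=
      (Continuous.prodMk_right x₀).continuousOn
    exact hFc.comp hc (fun t ht => hx t ht)
  · -- measurability of F' x₀
    rw [hIoc]
    have hc : ContinuousOn (fun t : ℝ => ((x₀, t) : E × ℝ)) (Icc 0 1) :=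
      (Continuous.prodMk_right x₀).continuousOn
    have : ContinuousOn (fun t => (fderiv ℝ (Function.uncurry F) (x₀, t)).comp
        (ContinuousLinearMap.inl ℝ E ℝ)) (Icc (0:ℝ) 1) :=
      (hfd.comp hc (fun t ht => hx t ht)).clm_comp continuousOn_const
    exact (this.mono Ioc_subset_Icc_self).aestronglyMeasurable measurableSet_Ioc
  · -- bound
    refine Filter.Eventually.of_forall (fun t ht x hxb => ?_)
    have hxt : (x, t) ∈ closedBall x₀ ε ×ˢ Icc (0:ℝ) 1 :=
      ⟨ball_subset_closedBall hxb, by rw [hIoc] at ht; exact Ioc_subset_Icc_self ht⟩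
    calc ‖(fderiv ℝ (Function.uncurry F) (x, t)).comp (ContinuousLinearMap.inl ℝ E ℝ)‖
        ≤ ‖fderiv ℝ (Function.uncurry F) (x, t)‖ * ‖ContinuousLinearMap.inl ℝ E ℝ‖ :=
          ContinuousLinearMap.opNorm_comp_le _ _
      _ ≤ C * ‖ContinuousLinearMap.inl ℝ E ℝ‖ :=
          mul_le_mul_of_nonneg_right (hC _ hxt) (norm_nonneg _)
  · exact intervalIntegrable_const
  · refine Filter.Eventually.of_forall (fun t ht x hxb => ?_)
    exact hpart x t (hεV ⟨ball_subset_closedBall hxb,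
      by rw [hIoc] at ht; exact Ioc_subset_Icc_self ht⟩)

lemma param_contDiffOn {E : Type} [NormedAddCommGroup E] [NormedSpace ℝ E] [ProperSpace E] :
    ∀ (k : ℕ) {G : Type} [NormedAddCommGroup G] [NormedSpace ℝ G] [CompleteSpace G]
      (F : E → ℝ → G) (V : Set (E × ℝ)), IsOpen V →
      ContDiffOn ℝ k (Function.uncurry F) V →
      ∀ (U : Set E), IsOpen U → (∀ x ∈ U, ∀ t ∈ Icc (0:ℝ) 1, (x, t) ∈ V) →
      ContDiffOn ℝ k (fun x => ∫ t in (0:ℝ)..1, F x t) U := by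
  intro k
  induction k with
  | zero =>
    intro G _ _ _ F V hV hF U hU hUV
    rw [Nat.cast_zero, contDiffOn_zero] at hF ⊢
    intro x₀ hx₀
    apply ContinuousAt.continuousWithinAt
    obtain ⟨ε, εpos, hεV⟩ := tube_lemma' hV (hUV x₀ hx₀)
    have hIoc : Set.uIoc (0:ℝ) 1 = Ioc (0:ℝ) 1 := uIoc_of_le zero_le_one
    have hWc : IsCompact (closedBall x₀ ε ×ˢ Icc (0:ℝ) 1) :=
      (isCompact_closedBall x₀ ε).prod isCompact_Icc
    obtain ⟨C, hC⟩ := hWc.exists_bound_of_continuousOn (hF.mono hεV)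
    apply intervalIntegral.continuousAt_of_dominated_interval
      (bound := fun _ => C) (μ := volume)
    · filter_upwards [(isOpen_ball).mem_nhds (mem_ball_self εpos)] with x hxb
      have hc : ContinuousOn (fun t : ℝ => ((x, t) : E × ℝ)) (Icc 0 1) :=
        (Continuous.prodMk_right x).continuousOn
      have : ContinuousOn (fun t => F x t) (Icc (0:ℝ) 1) :=
        hF.comp hc (fun t ht => hεV ⟨ball_subset_closedBall hxb, ht⟩)
      rw [hIoc]
      exact (this.mono Ioc_subset_Icc_self).aestronglyMeasurable measurableSet_Ioc
    · filter_upwards [(isOpen_ball).mem_nhds (mem_ball_self εpos)] with x hxb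
      refine Filter.Eventually.of_forall (fun t ht => ?_)
      rw [hIoc] at ht
      exact hC (x, t) ⟨ball_subset_closedBall hxb, Ioc_subset_Icc_self ht⟩
    · exact intervalIntegrable_const
    · refine Filter.Eventually.of_forall (fun t ht => ?_)
      rw [hIoc] at ht
      have hxt : (x₀, t) ∈ V := hUV x₀ hx₀ t (Ioc_subset_Icc_self ht)
      have : ContinuousAt (Function.uncurry F) (x₀, t) := hF.continuousAt (hV.mem_nhds hxt)
      have h2 : ContinuousAt (fun x : E => (x, t)) x₀ := (Continuous.prodMk_left t).continuousAt
      exact ContinuousAt.comp (f := fun x : E => (x, t)) (x := x₀) this h2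
  | succ k IH =>
    intro G _ _ _ F V hV hF U hU hUV
    have hcast0 : ((k + 1 : ℕ) : WithTop ℕ∞) = (k : WithTop ℕ∞) + 1 := by push_cast; ring
    have hF2 : ContDiffOn ℝ ((k : WithTop ℕ∞) + 1) (Function.uncurry F) V := hcast0 ▸ hF
    have h1 : ContDiffOn ℝ 1 (Function.uncurry F) V := hF2.of_le le_add_self
    have hder : ∀ x ∈ U, HasFDerivAt (fun x => ∫ t in (0:ℝ)..1, F x t)
        (∫ t in (0:ℝ)..1, (fderiv ℝ (Function.uncurry F) (x, t)).comp
          (ContinuousLinearMap.inl ℝ E ℝ)) x :=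
      fun x hx => param_hasFDerivAt hV h1 (hUV x hx)
    rw [hcast0, contDiffOn_succ_iff_fderiv_of_isOpen hU]
    refine ⟨fun x hx => (hder x hx).differentiableAt.differentiableWithinAt,
      fun h => absurd h (by simp), ?_⟩
    · have hF' : ContDiffOn ℝ k
          (Function.uncurry (fun x t => (fderiv ℝ (Function.uncurry F) (x, t)).comp
            (ContinuousLinearMap.inl ℝ E ℝ))) V := by
        have := (hF2.fderiv_of_isOpen hV le_rfl).clm_comp
          (contDiffOn_const (c := ContinuousLinearMap.inl ℝ E ℝ))
        exact this
      have := IH (fun x t => (fderiv ℝ (Function.uncurry F) (x, t)).comp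
        (ContinuousLinearMap.inl ℝ E ℝ)) V hV hF' U hU hUV
      exact this.congr (fun x hx => (hder x hx).fderiv)

lemma cons_comp_zero_succAbove {α : Type*} {m : ℕ} (u : α) (v : Fin (m + 1) → α) :
    (Fin.cons u v : Fin (m + 2) → α) ∘ (0 : Fin (m + 2)).succAbove = v := by
  funext j
  simp [Fin.zero_succAbove]

lemma cons_comp_succ_succAbove {α : Type*} {m : ℕ} (u : α) (v : Fin (m + 1) → α)
    (i : Fin (m + 1)) :
    (Fin.cons u v : Fin (m + 2) → α) ∘ (Fin.succ i).succAbove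
      = Fin.cons u (v ∘ i.succAbove) := by
  funext j
  refine Fin.cases ?_ (fun j => ?_) j
  · simp
  · simp [Fin.succ_succAbove_succ]

lemma alt_cons_eq {M : Type*} [AddCommGroup M] [Module ℝ M] {m : ℕ}
    (A : M [⋀^Fin (m + 1)]→ₗ[ℝ] ℝ) (v : Fin (m + 1) → M) (i : Fin (m + 1)) :
    A (Fin.cons (v i) (v ∘ i.succAbove)) = (-1 : ℝ) ^ (i : ℕ) * A v := by
  have hv : (Fin.cons (v i) (v ∘ i.succAbove) : Fin (m + 1) → M) = v ∘ ⇑(i.cycleRange⁻¹) := by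
    funext j
    refine Fin.cases ?_ (fun j => ?_) j
    · have : i.cycleRange⁻¹ 0 = i := by
        rw [Equiv.Perm.inv_def, Equiv.symm_apply_eq, Fin.cycleRange_self]
      simp [this]
    · have : i.cycleRange⁻¹ j.succ = i.succAbove j := by
        rw [Equiv.Perm.inv_def, Equiv.symm_apply_eq, Fin.cycleRange_succAbove]
      simp [this]
  rw [hv, A.map_perm]
  have hs : Equiv.Perm.sign (i.cycleRange⁻¹) = (-1 : ℤˣ) ^ (i : ℕ) := by
    rw [map_inv, Fin.sign_cycleRange]
    simp
  rw [hs, Units.smul_def, zsmul_eq_mul]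
  norm_cast

lemma omega_cons_expand {n m : ℕ} (A : (Fin n → ℝ) [⋀^Fin (m + 1)]→ₗ[ℝ] ℝ)
    (w : Fin m → (Fin n → ℝ)) (u : Fin n → ℝ) :
    A (Fin.cons u w) = ∑ j : Fin n, u j * A (Fin.cons (Pi.single j 1) w) := by
  let L : (Fin n → ℝ) →ₗ[ℝ] ℝ :=
  { toFun := fun z => A (Fin.cons z w)
    map_add' := fun a b => by
      have h := A.map_update_add (Fin.cons a w) 0 a b
      simpa [Fin.update_cons_zero] using h
    map_smul' := fun r a => by
      have h := A.map_update_smul (Fin.cons a w) 0 r a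
      simpa [Fin.update_cons_zero] using h }
  have h := LinearMap.pi_apply_eq_sum_univ L u
  have hsingle : ∀ j : Fin n, (fun j' => if j = j' then (1 : ℝ) else 0) = Pi.single j 1 := by
    intro j
    funext j'
    simp [Pi.single_apply, eq_comm]
  simp only [hsingle] at h
  simpa only [L, LinearMap.coe_mk, AddHom.coe_mk, smul_eq_mul] using h

end Auxiliary

open MeasureTheory Metric Set intervalIntegral in
/-- **Poincaré lemma.** On a convex open set `Ω ⊆ ℝⁿ`, every smooth
closed `k`-form with `k ≥ 1` (here `k = m + 1`) is exact: there is a smooth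
`(k−1)`-form `η` with `dη = ω` on `Ω`. -/
theorem poincare_lemma
    (n m : ℕ) (Ω : Set (Fin n → ℝ)) (hΩo : IsOpen Ω) (hΩc : Convex ℝ Ω)
    (ω : DForm n (m + 1))
    (hsmooth : ∀ v : Fin (m + 1) → (Fin n → ℝ),
      ContDiffOn ℝ (⊤ : ℕ∞) (fun x => fval ω x v) Ω)
    (hclosed : ∀ x ∈ Ω, ∀ v : Fin (m + 2) → (Fin n → ℝ), dOp (fval ω) x v = 0) :
    ∃ η : DForm n m,
      (∀ v : Fin m → (Fin n → ℝ), ContDiffOn ℝ (⊤ : ℕ∞) (fun x => fval η x v) Ω) ∧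
      ∀ x ∈ Ω, ∀ v : Fin (m + 1) → (Fin n → ℝ), dOp (fval η) x v = fval ω x v := by
  classical
  rcases Set.eq_empty_or_nonempty Ω with hΩe | ⟨c, hc⟩
  · subst hΩe
    exact ⟨fun _ => 0, fun v x hx => absurd hx (Set.notMem_empty x),
      fun x hx => absurd hx (Set.notMem_empty x)⟩
  -- the path and the open tube set
  set γ : (Fin n → ℝ) → ℝ → (Fin n → ℝ) := fun x t => c + t • (x - c) with hγdef
  set V : Set ((Fin n → ℝ) × ℝ) := {p | γ p.1 p.2 ∈ Ω} with hVdef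
  have hγc : Continuous (fun p : (Fin n → ℝ) × ℝ => γ p.1 p.2) :=
    continuous_const.add (continuous_snd.smul (continuous_fst.sub continuous_const))
  have hV : IsOpen V := hΩo.preimage hγc
  have hseg : ∀ x ∈ Ω, ∀ t ∈ Icc (0:ℝ) 1, (x, t) ∈ V := by
    intro x hx t ht
    have h1 : γ x t = (1 - t) • c + t • x := by
      funext i
      simp [hγdef, smul_eq_mul]
      ring
    show γ x t ∈ Ω
    rw [h1]
    exact hΩc hc hx (by linarith [ht.2]) ht.1 (by ring)
  -- the integrand
  set Fw : (Fin m → (Fin n → ℝ)) → (Fin n → ℝ) → ℝ → ℝ :=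
    fun w x t => t ^ m * fval ω (γ x t) (Fin.cons (x - c) w) with hFwdef
  have hFwEq : ∀ w, Function.uncurry (Fw w) = fun p : (Fin n → ℝ) × ℝ =>
      p.2 ^ m * ∑ j : Fin n, (p.1 j - c j) *
        fval ω (γ p.1 p.2) (Fin.cons (Pi.single j 1) w) := by
    intro w
    funext p
    show Fw w p.1 p.2 = _
    rw [hFwdef]
    simp only [fval]
    rw [omega_cons_expand]
    simp [Pi.sub_apply]
  have hcast_le : ∀ k : ℕ, (k : WithTop ℕ∞) ≤ ((⊤ : ℕ∞) : WithTop ℕ∞) := by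
    intro k; exact_mod_cast le_top
  have hone_le : (1 : WithTop ℕ∞) ≤ ((⊤ : ℕ∞) : WithTop ℕ∞) := by exact_mod_cast le_top
  have hFw : ∀ w (k : ℕ), ContDiffOn ℝ k (Function.uncurry (Fw w)) V := by
    intro w k
    rw [hFwEq w]
    apply ContDiffOn.mul
    · exact (contDiff_snd.pow m).contDiffOn
    · apply ContDiffOn.sum
      intro j _
      apply ContDiffOn.mul
      · exact (((ContinuousLinearMap.proj j : (Fin n → ℝ) →L[ℝ] ℝ).contDiff.comp
          contDiff_fst).sub contDiff_const).contDiffOn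
      · have hg := (hsmooth (Fin.cons (Pi.single j 1) w)).of_le (hcast_le k)
        have hψ : ContDiffOn ℝ k (fun p : (Fin n → ℝ) × ℝ => γ p.1 p.2) V :=
          (contDiff_const.add (contDiff_snd.smul (contDiff_fst.sub contDiff_const))).contDiffOn
        exact hg.comp hψ (fun p hp => hp)
  -- continuity/integrability helpers along the path
  have hpathC : ∀ x ∈ Ω, ∀ (f : (Fin n → ℝ) → ℝ), ContinuousOn f Ω →
      ContinuousOn (fun t => f (γ x t)) (Icc (0:ℝ) 1) := by
    intro x hx f hf
    have hγt : Continuous (fun t : ℝ => γ x t) :=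
      continuous_const.add (continuous_id.smul continuous_const)
    exact hf.comp hγt.continuousOn (fun t ht => hseg x hx t ht)
  have hIIω : ∀ x ∈ Ω, ∀ (q : ℝ → ℝ), Continuous q → ∀ (a : Fin (m + 1) → (Fin n → ℝ)),
      IntervalIntegrable (fun t => q t * fval ω (γ x t) a) volume 0 1 := by
    intro x hx q hq a
    apply ContinuousOn.intervalIntegrable
    rw [uIcc_of_le zero_le_one]
    exact hq.continuousOn.mul (hpathC x hx _ (hsmooth a).continuousOn)
  -- definition of the primitive form η
  set η : DForm n m := fun x =>
    if hx : x ∈ Ω then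
      { toFun := fun w => ∫ t in (0:ℝ)..1, Fw w x t
        map_update_add' := by
          intro inst w i a b
          have e : ∀ z : Fin n → ℝ, ∀ t : ℝ, Fw (Function.update w i z) x t
              = t ^ m * fval ω (γ x t) (Function.update (Fin.cons (x - c) w) i.succ z) := by
            intro z t
            have hcu : (Fin.cons (x - c) (Function.update w i z) : Fin (m+1) → (Fin n → ℝ))
                = Function.update (Fin.cons (x - c) w) i.succ z := by
              funext j
              refine Fin.cases ?_ (fun j' => ?_) j
              · rw [Function.update_of_ne (Ne.symm (Fin.succ_ne_zero i))]
                simp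
              · by_cases h : j' = i
                · subst h
                  rw [Function.update_self, Fin.cons_succ, Function.update_self]
                · rw [Function.update_of_ne (fun hh => h (Fin.succ_injective _ hh)),
                    Fin.cons_succ, Fin.cons_succ, Function.update_of_ne h]
            simp only [hFwdef, hcu]
          simp only [e]
          have hsplit : ∀ t : ℝ, t ^ m * fval ω (γ x t)
              (Function.update (Fin.cons (x - c) w) i.succ (a + b))
              = t ^ m * fval ω (γ x t) (Function.update (Fin.cons (x - c) w) i.succ a)
                + t ^ m * fval ω (γ x t) (Function.update (Fin.cons (x - c) w) i.succ b) := by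
            intro t
            show t ^ m * (ω (γ x t)) _ = t ^ m * (ω (γ x t)) _ + t ^ m * (ω (γ x t)) _
            rw [(ω (γ x t)).map_update_add]
            ring
          simp only [hsplit]
          exact intervalIntegral.integral_add
            (hIIω x hx _ (continuous_pow m) _) (hIIω x hx _ (continuous_pow m) _)
        map_update_smul' := by
          intro inst w i r a
          have e : ∀ z : Fin n → ℝ, ∀ t : ℝ, Fw (Function.update w i z) x t
              = t ^ m * fval ω (γ x t) (Function.update (Fin.cons (x - c) w) i.succ z) := by
            intro z t
            have hcu : (Fin.cons (x - c) (Function.update w i z) : Fin (m+1) → (Fin n → ℝ))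
                = Function.update (Fin.cons (x - c) w) i.succ z := by
              funext j
              refine Fin.cases ?_ (fun j' => ?_) j
              · rw [Function.update_of_ne (Ne.symm (Fin.succ_ne_zero i))]
                simp
              · by_cases h : j' = i
                · subst h
                  rw [Function.update_self, Fin.cons_succ, Function.update_self]
                · rw [Function.update_of_ne (fun hh => h (Fin.succ_injective _ hh)),
                    Fin.cons_succ, Fin.cons_succ, Function.update_of_ne h]
            simp only [hFwdef, hcu]
          simp only [e]
          have hsplit : ∀ t : ℝ, t ^ m * fval ω (γ x t)
              (Function.update (Fin.cons (x - c) w) i.succ (r • a))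
              = r * (t ^ m * fval ω (γ x t) (Function.update (Fin.cons (x - c) w) i.succ a)) := by
            intro t
            show t ^ m * (ω (γ x t)) _ = r * (t ^ m * (ω (γ x t)) _)
            rw [(ω (γ x t)).map_update_smul]
            simp [smul_eq_mul]
            ring
          simp only [hsplit]
          rw [intervalIntegral.integral_const_mul]
          simp [smul_eq_mul]
        map_eq_zero_of_eq' := by
          intro w i j hij hne
          have hz : ∀ t : ℝ, Fw w x t = 0 := by
            intro t
            rw [hFwdef]
            show t ^ m * (ω (γ x t)) (Fin.cons (x - c) w) = 0
            rw [(ω (γ x t)).map_eq_zero_of_eq (Fin.cons (x - c) w)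
              (i := i.succ) (j := j.succ) (by simp [Fin.cons_succ, hij])
              (fun h => hne (Fin.succ_injective _ h))]
            ring
          simp only [hz]
          simp }
    else 0
    with hηdef
  have hηval : ∀ x ∈ Ω, ∀ w, fval η x w = ∫ t in (0:ℝ)..1, Fw w x t := by
    intro x hx w
    rw [hηdef]
    simp only [fval, dif_pos hx]
    rfl
  refine ⟨η, ?_, ?_⟩
  · -- smoothness of η
    intro w
    apply contDiffOn_infty.2
    intro k
    exact (param_contDiffOn k (Fw w) V hV (hFw w k) Ω hΩo hseg).congr
      (fun x hx => hηval x hx w)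
  · -- dη = ω
    intro x hx v
    set u : Fin n → ℝ := x - c with hu
    have hgdiff : ∀ (a : Fin (m + 1) → (Fin n → ℝ)), ∀ z ∈ Ω,
        HasFDerivAt (fun y => fval ω y a) (fderiv ℝ (fun y => fval ω y a) z) z := by
      intro a z hz
      exact (((hsmooth a).contDiffAt (hΩo.mem_nhds hz)).differentiableAt (by simp)).hasFDerivAt
    -- step 1: the derivative of each η-component
    have key : ∀ i : Fin (m + 1),
        fderiv ℝ (fun y => fval η y (v ∘ i.succAbove)) x (v i)
          = ∫ t in (0:ℝ)..1,
              (t ^ (m + 1) * fderiv ℝ (fun z => fval ω z (Fin.cons u (v ∘ i.succAbove)))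
                  (γ x t) (v i)
                + t ^ m * fval ω (γ x t) (Fin.cons (v i) (v ∘ i.succAbove))) := by
      intro i
      set w : Fin m → (Fin n → ℝ) := v ∘ i.succAbove with hwdef
      have hEq : (fun y => fval η y w) =ᶠ[nhds x] (fun y => ∫ t in (0:ℝ)..1, Fw w y t) :=
        Filter.eventuallyEq_of_mem (hΩo.mem_nhds hx) (fun y hy => hηval y hy w)
      have hF1 : ContDiffOn ℝ 1 (Function.uncurry (Fw w)) V := by
        have := hFw w 1
        rwa [Nat.cast_one] at this
      have hD := param_hasFDerivAt hV hF1 (fun t ht => hseg x hx t ht)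
      have hfderiv : fderiv ℝ (fun y => fval η y w) x
          = ∫ t in (0:ℝ)..1, (fderiv ℝ (Function.uncurry (Fw w)) (x, t)).comp
              (ContinuousLinearMap.inl ℝ (Fin n → ℝ) ℝ) := by
        rw [hEq.fderiv_eq, hD.fderiv]
      have hfdC : ContinuousOn (fderiv ℝ (Function.uncurry (Fw w))) V :=
        hF1.continuousOn_fderiv_of_isOpen hV le_rfl
      have hφ : IntervalIntegrable (fun t => (fderiv ℝ (Function.uncurry (Fw w)) (x, t)).comp
          (ContinuousLinearMap.inl ℝ (Fin n → ℝ) ℝ)) volume 0 1 := by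
        apply ContinuousOn.intervalIntegrable
        rw [uIcc_of_le zero_le_one]
        have hcx : ContinuousOn (fun t : ℝ => ((x, t) : (Fin n → ℝ) × ℝ)) (Icc 0 1) :=
          (Continuous.prodMk_right x).continuousOn
        exact (hfdC.comp hcx (fun t ht => hseg x hx t ht)).clm_comp continuousOn_const
      rw [hfderiv, ContinuousLinearMap.intervalIntegral_apply hφ]
      apply intervalIntegral.integral_congr
      intro t ht
      rw [uIcc_of_le zero_le_one] at ht
      have hxtV : (x, t) ∈ V := hseg x hx t ht
      have hyΩ : γ x t ∈ Ω := hxtV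
      have hpart : HasFDerivAt (fun z => Fw w z t)
          ((fderiv ℝ (Function.uncurry (Fw w)) (x, t)).comp
            (ContinuousLinearMap.inl ℝ (Fin n → ℝ) ℝ)) x := by
        have h1 : HasFDerivAt (Function.uncurry (Fw w))
            (fderiv ℝ (Function.uncurry (Fw w)) (x, t)) (x, t) :=
          ((hF1.contDiffAt (hV.mem_nhds hxtV)).differentiableAt one_ne_zero).hasFDerivAt
        exact h1.comp x (hasFDerivAt_prodMk_left (𝕜 := ℝ) x t)
      -- explicit derivative of z ↦ Fw w z t
      have hψt : HasFDerivAt (fun z : Fin n → ℝ => γ z t)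
          (t • ContinuousLinearMap.id ℝ (Fin n → ℝ)) x := by
        have h3 : HasFDerivAt (fun z : Fin n → ℝ => c + t • (z - c))
            (t • ContinuousLinearMap.id ℝ (Fin n → ℝ)) x :=
          (((hasFDerivAt_id x).sub_const c).const_smul t).const_add c
        exact h3
      have hj : ∀ j : Fin n, HasFDerivAt
          (fun z => (z j - c j) * fval ω (γ z t) (Fin.cons (Pi.single j 1) w))
          ((x j - c j) • ((fderiv ℝ (fun y => fval ω y (Fin.cons (Pi.single j 1) w))
              (γ x t)).comp (t • ContinuousLinearMap.id ℝ (Fin n → ℝ)))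
            + (fval ω (γ x t) (Fin.cons (Pi.single j 1) w)) •
              (ContinuousLinearMap.proj j : (Fin n → ℝ) →L[ℝ] ℝ)) x := by
        intro j
        have h0 : HasFDerivAt (fun z : Fin n → ℝ => z j)
            (ContinuousLinearMap.proj j : (Fin n → ℝ) →L[ℝ] ℝ) x :=
          (ContinuousLinearMap.proj j : (Fin n → ℝ) →L[ℝ] ℝ).hasFDerivAt
        have h1 : HasFDerivAt (fun z : Fin n → ℝ => z j - c j)
            (ContinuousLinearMap.proj j : (Fin n → ℝ) →L[ℝ] ℝ) x := h0.sub_const (c j)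
        have h2 : HasFDerivAt (fun z => fval ω (γ z t) (Fin.cons (Pi.single j 1) w))
            ((fderiv ℝ (fun y => fval ω y (Fin.cons (Pi.single j 1) w)) (γ x t)).comp
              (t • ContinuousLinearMap.id ℝ (Fin n → ℝ))) x :=
          HasFDerivAt.comp (g := fun y => fval ω y (Fin.cons (Pi.single j 1) w)) x (hgdiff _ (γ x t) hyΩ) hψt
        exact h1.mul h2
      have hexp : HasFDerivAt (fun z => Fw w z t)
          ((t ^ m : ℝ) • ∑ j : Fin n,
            ((x j - c j) • ((fderiv ℝ (fun y => fval ω y (Fin.cons (Pi.single j 1) w))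
                (γ x t)).comp (t • ContinuousLinearMap.id ℝ (Fin n → ℝ)))
              + (fval ω (γ x t) (Fin.cons (Pi.single j 1) w)) •
                (ContinuousLinearMap.proj j : (Fin n → ℝ) →L[ℝ] ℝ))) x := by
        have hsum := HasFDerivAt.fun_sum (fun j (_ : j ∈ Finset.univ) => hj j)
        have hmul := hsum.const_mul ((t : ℝ) ^ m)
        have hfun : (fun z => (t:ℝ) ^ m * ∑ j : Fin n,
            (z j - c j) * fval ω (γ z t) (Fin.cons (Pi.single j 1) w)) = fun z => Fw w z t := by
          funext z
          have := congrFun (hFwEq w) (z, t)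
          simpa [Function.uncurry] using this.symm
        rw [← hfun]
        exact hmul
      have huniq := hpart.unique hexp
      show ((fderiv ℝ (Function.uncurry (Fw w)) (x, t)).comp
          (ContinuousLinearMap.inl ℝ (Fin n → ℝ) ℝ)) (v i)
        = t ^ (m + 1) * fderiv ℝ (fun z => fval ω z (Fin.cons u w)) (γ x t) (v i)
          + t ^ m * fval ω (γ x t) (Fin.cons (v i) w)
      rw [huniq]
      -- apply the explicit derivative to v i and compute
      have hE2 : fderiv ℝ (fun z => fval ω z (Fin.cons u w)) (γ x t) (v i)
          = ∑ j : Fin n, u j *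
              fderiv ℝ (fun y => fval ω y (Fin.cons (Pi.single j 1) w)) (γ x t) (v i) := by
        have hfn : (fun z => fval ω z (Fin.cons u w))
            = fun z => ∑ j : Fin n, u j * fval ω z (Fin.cons (Pi.single j 1) w) := by
          funext z
          exact omega_cons_expand (ω z) w u
        have hds : HasFDerivAt (fun z => ∑ j : Fin n, u j * fval ω z (Fin.cons (Pi.single j 1) w))
            (∑ j : Fin n, u j •
              fderiv ℝ (fun y => fval ω y (Fin.cons (Pi.single j 1) w)) (γ x t)) (γ x t) :=
          HasFDerivAt.fun_sum (fun j _ => (hgdiff _ (γ x t) hyΩ).const_mul (u j))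
        rw [hfn, hds.fderiv]
        simp [ContinuousLinearMap.sum_apply, smul_eq_mul]
      have hE1 : fval ω (γ x t) (Fin.cons (v i) w)
          = ∑ j : Fin n, (v i) j * fval ω (γ x t) (Fin.cons (Pi.single j 1) w) :=
        omega_cons_expand (ω (γ x t)) w (v i)
      rw [hE2, hE1]
      simp only [ContinuousLinearMap.coe_smul', Pi.smul_apply, ContinuousLinearMap.coe_sum',
        Finset.sum_apply, ContinuousLinearMap.add_apply, ContinuousLinearMap.coe_comp',
        Function.comp_apply, ContinuousLinearMap.smul_apply, ContinuousLinearMap.coe_id',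
        Pi.smul_apply, id_eq, ContinuousLinearMap.proj_apply, smul_eq_mul]
      have hmapsmul : ∀ j : Fin n,
          fderiv ℝ (fun y => fval ω y (Fin.cons (Pi.single j 1) w)) (γ x t) (t • v i)
            = t * fderiv ℝ (fun y => fval ω y (Fin.cons (Pi.single j 1) w)) (γ x t) (v i) := by
        intro j
        rw [(fderiv ℝ (fun y => fval ω y (Fin.cons (Pi.single j 1) w)) (γ x t)).map_smul]
        simp [smul_eq_mul]
      simp only [hmapsmul]
      rw [Finset.mul_sum, Finset.mul_sum, Finset.mul_sum, ← Finset.sum_add_distrib]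
      refine Finset.sum_congr rfl (fun j _ => ?_)
      have : u j = x j - c j := by rw [hu]; simp
      rw [this]
      ring
    -- step 2: assemble and use closedness + FTC
    have hDC : ∀ (a : Fin (m + 1) → (Fin n → ℝ)) (h : Fin n → ℝ),
        ContinuousOn (fun t => fderiv ℝ (fun z => fval ω z a) (γ x t) h) (Icc (0:ℝ) 1) := by
      intro a h
      have h1 : ContinuousOn (fun y => fderiv ℝ (fun z => fval ω z a) y) Ω :=
        (hsmooth a).continuousOn_fderiv_of_isOpen hΩo hone_le
      exact hpathC x hx _ (h1.clm_apply continuousOn_const)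
    have hIIi : ∀ i : Fin (m + 1), IntervalIntegrable (fun t => (-1:ℝ) ^ (i : ℕ) *
        (t ^ (m + 1) * fderiv ℝ (fun z => fval ω z (Fin.cons u (v ∘ i.succAbove))) (γ x t) (v i)
          + t ^ m * fval ω (γ x t) (Fin.cons (v i) (v ∘ i.succAbove)))) volume 0 1 := by
      intro i
      apply ContinuousOn.intervalIntegrable
      rw [uIcc_of_le zero_le_one]
      exact continuousOn_const.mul
        (((continuous_pow (m+1)).continuousOn.mul (hDC _ _)).add
          ((continuous_pow m).continuousOn.mul (hpathC x hx _ (hsmooth _).continuousOn)))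
    have hsum : dOp (fval η) x v
        = ∑ i : Fin (m + 1), ∫ t in (0:ℝ)..1, (-1:ℝ) ^ (i : ℕ) *
            (t ^ (m + 1) * fderiv ℝ (fun z => fval ω z (Fin.cons u (v ∘ i.succAbove)))
                (γ x t) (v i)
              + t ^ m * fval ω (γ x t) (Fin.cons (v i) (v ∘ i.succAbove))) := by
      simp only [dOp]
      refine Finset.sum_congr rfl (fun i _ => ?_)
      rw [show (fun y => fval η y (v ∘ i.succAbove)) = fun y => fval η y (v ∘ i.succAbove) from rfl,
        key i, ← intervalIntegral.integral_const_mul]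
    rw [hsum, ← intervalIntegral.integral_finset_sum (fun i _ => hIIi i)]
    have hptwise : ∀ t ∈ Icc (0:ℝ) 1,
        (∑ i : Fin (m + 1), (-1:ℝ) ^ (i : ℕ) *
          (t ^ (m + 1) * fderiv ℝ (fun z => fval ω z (Fin.cons u (v ∘ i.succAbove)))
              (γ x t) (v i)
            + t ^ m * fval ω (γ x t) (Fin.cons (v i) (v ∘ i.succAbove))))
        = t ^ (m + 1) * fderiv ℝ (fun z => fval ω z v) (γ x t) u
          + ((m : ℝ) + 1) * t ^ m * fval ω (γ x t) v := by
      intro t ht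
      have hyΩ : γ x t ∈ Ω := hseg x hx t ht
      have hcl := hclosed (γ x t) hyΩ (Fin.cons u v)
      rw [dOp] at hcl
      rw [Fin.sum_univ_succ] at hcl
      rw [show ((Fin.cons u v : Fin (m+2) → (Fin n → ℝ)) ∘ (0 : Fin (m + 2)).succAbove) = v from
        cons_comp_zero_succAbove u v] at hcl
      simp only [Fin.cons_zero, Fin.cons_succ, Fin.val_zero, pow_zero, one_mul,
        Fin.val_succ] at hcl
      have he1 : ∀ i : Fin (m + 1),
          ((Fin.cons u v : Fin (m+2) → (Fin n → ℝ)) ∘ (Fin.succ i).succAbove)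
            = Fin.cons u (v ∘ i.succAbove) := cons_comp_succ_succAbove u v
      simp only [he1] at hcl
      have h2 : ∑ i : Fin (m + 1), (-1:ℝ) ^ ((i:ℕ) + 1) *
          fderiv ℝ (fun y => fval ω y (Fin.cons u (v ∘ i.succAbove))) (γ x t) (v i)
          = -∑ i : Fin (m + 1), (-1:ℝ) ^ (i:ℕ) *
              fderiv ℝ (fun y => fval ω y (Fin.cons u (v ∘ i.succAbove))) (γ x t) (v i) := by
        rw [← Finset.sum_neg_distrib]
        exact Finset.sum_congr rfl (fun i _ => by ring)
      rw [h2] at hcl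
      have hA : ∑ i : Fin (m + 1), (-1:ℝ) ^ (i:ℕ) *
          fderiv ℝ (fun y => fval ω y (Fin.cons u (v ∘ i.succAbove))) (γ x t) (v i)
          = fderiv ℝ (fun y => fval ω y v) (γ x t) u := by linarith
      have hB : ∀ i : Fin (m + 1), fval ω (γ x t) (Fin.cons (v i) (v ∘ i.succAbove))
          = (-1:ℝ) ^ (i : ℕ) * fval ω (γ x t) v := fun i => alt_cons_eq (ω (γ x t)) v i
      calc ∑ i : Fin (m + 1), (-1:ℝ) ^ (i : ℕ) *
            (t ^ (m + 1) * fderiv ℝ (fun z => fval ω z (Fin.cons u (v ∘ i.succAbove)))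
                (γ x t) (v i)
              + t ^ m * fval ω (γ x t) (Fin.cons (v i) (v ∘ i.succAbove)))
          = ∑ i : Fin (m + 1), (t ^ (m + 1) * ((-1:ℝ) ^ (i : ℕ) *
              fderiv ℝ (fun z => fval ω z (Fin.cons u (v ∘ i.succAbove))) (γ x t) (v i))
              + t ^ m * fval ω (γ x t) v) := by
            refine Finset.sum_congr rfl (fun i _ => ?_)
            rw [hB i]
            have hsq : (-1:ℝ) ^ (i:ℕ) * (-1:ℝ) ^ (i:ℕ) = 1 := by
              rw [← pow_add]
              exact Even.neg_one_pow ⟨(i:ℕ), rfl⟩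
            linear_combination (t ^ m * fval ω (γ x t) v) * hsq
        _ = t ^ (m + 1) * (∑ i : Fin (m + 1), (-1:ℝ) ^ (i:ℕ) *
              fderiv ℝ (fun z => fval ω z (Fin.cons u (v ∘ i.succAbove))) (γ x t) (v i))
            + ((m : ℝ) + 1) * t ^ m * fval ω (γ x t) v := by
            rw [Finset.sum_add_distrib, ← Finset.mul_sum, Finset.sum_const, Finset.card_univ,
              Fintype.card_fin, nsmul_eq_mul]
            push_cast
            ring
        _ = _ := by rw [hA]
    rw [intervalIntegral.integral_congr
      (fun t ht => hptwise t (by rwa [uIcc_of_le zero_le_one] at ht))]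
    -- FTC
    have hder : ∀ t ∈ uIcc (0:ℝ) 1, HasDerivAt (fun s => s ^ (m + 1) * fval ω (γ x s) v)
        (t ^ (m + 1) * fderiv ℝ (fun z => fval ω z v) (γ x t) u
          + ((m : ℝ) + 1) * t ^ m * fval ω (γ x t) v) t := by
      intro t ht
      rw [uIcc_of_le zero_le_one] at ht
      have hyΩ : γ x t ∈ Ω := hseg x hx t ht
      have h1 : HasFDerivAt (fun z => fval ω z v) (fderiv ℝ (fun z => fval ω z v) (γ x t))
          (γ x t) := hgdiff v (γ x t) hyΩ
      have h2 : HasDerivAt (fun s : ℝ => γ x s) u t := by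
        have h3 : HasDerivAt (fun s : ℝ => c + s • (x - c)) ((1:ℝ) • (x - c)) t :=
          ((hasDerivAt_id t).smul_const (x - c)).const_add c
        rw [hu]
        simpa [one_smul, hγdef] using h3
      have h3 := h1.comp_hasDerivAt t h2
      have h4 := (hasDerivAt_pow (m + 1) t).mul h3
      refine h4.congr_deriv ?_
      simp only [Function.comp_apply, Nat.add_sub_cancel]
      push_cast
      ring
    have hint : IntervalIntegrable (fun t => t ^ (m + 1) *
        fderiv ℝ (fun z => fval ω z v) (γ x t) u
          + ((m : ℝ) + 1) * t ^ m * fval ω (γ x t) v) volume 0 1 := by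
      apply ContinuousOn.intervalIntegrable
      rw [uIcc_of_le zero_le_one]
      exact ((continuous_pow (m+1)).continuousOn.mul (hDC v u)).add
        ((continuousOn_const.mul (continuous_pow m).continuousOn).mul
          (hpathC x hx _ (hsmooth v).continuousOn))
    rw [intervalIntegral.integral_eq_sub_of_hasDerivAt hder hint]
    have hγ1 : γ x 1 = x := by
      show c + (1:ℝ) • (x - c) = x
      simp
    have h0p : (0:ℝ) ^ (m + 1) = 0 := zero_pow (Nat.succ_ne_zero m)
    rw [hγ1, h0p]
    ring
end
end
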